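/- arXiv:2507.15080 — 6 statements merged into one kernel-verified Lean document; each statement's English description precedes it below -/
import Mathlib

section
/- If G is a simple graph of order n ≥ 3 that has no full vertex (i.e., no vertex adjacent to all other vertices), then the fair coalition number of G is at least twice the fair domatic number of G: C_f(G) ≥ 2·d_f(G). -/
open SimpleGraph

/-- `D` is a fair dominating set of `G`: it is a dominating set and there is some
`k ≥ 1` such that every vertex outside `D` has exactly `k` neighbors in `D`. -/
def IsFairDomSet {V : Type*} (G : SimpleGraph V) (D : Set V) : Prop :=
  (∀ v ∉ D, ∃ u ∈ D, G.Adj v u) ∧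
  ∃ k : ℕ, 1 ≤ k ∧ ∀ v ∉ D, (G.neighborSet v ∩ D).ncard = k

/-- A fair coalition partition of `G`: a partition of the vertex set into nonempty parts,
each of which is either a singleton fair dominating set, or is not a fair dominating set
but forms a fair coalition with another part that is not a fair dominating set. -/
def IsFairCoalitionPartition {V : Type*} (G : SimpleGraph V) (P : Finset (Set V)) : Prop :=
  (∀ A ∈ P, A.Nonempty) ∧
  (P : Set (Set V)).PairwiseDisjoint id ∧
  ⋃₀ (P : Set (Set V)) = Set.univ ∧
  ∀ A ∈ P, ((∃ v, A = {v}) ∧ IsFairDomSet G A) ∨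
    (¬ IsFairDomSet G A ∧ ∃ B ∈ P, B ≠ A ∧ ¬ IsFairDomSet G B ∧ IsFairDomSet G (A ∪ B))

/-- The fair coalition number of `G`: the maximum number of parts in a fair
coalition partition of `G`. -/
noncomputable def fairCoalitionNumber {V : Type*} (G : SimpleGraph V) : ℕ :=
  sSup {n | ∃ P : Finset (Set V), IsFairCoalitionPartition G P ∧ P.card = n}
/-- A fair domatic partition of `G`: a partition of the vertex set into fair dominating sets. -/
def IsFairDomaticPartition {V : Type*} (G : SimpleGraph V) (P : Finset (Set V)) : Prop :=
  (∀ A ∈ P, A.Nonempty) ∧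
  (P : Set (Set V)).PairwiseDisjoint id ∧
  ⋃₀ (P : Set (Set V)) = Set.univ ∧
  ∀ A ∈ P, IsFairDomSet G A

/-- The fair domatic number of `G`. -/
noncomputable def fairDomaticNumber {V : Type*} (G : SimpleGraph V) : ℕ :=
  sSup {n | ∃ P : Finset (Set V), IsFairDomaticPartition G P ∧ P.card = n}

lemma singleton_not_fds {V : Type*} (G : SimpleGraph V)
    (hfull : ∀ v : V, ∃ w : V, w ≠ v ∧ ¬ G.Adj v w) (x : V) :
    ¬ IsFairDomSet G ({x} : Set V) := by
  rintro ⟨hdom, -⟩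
  obtain ⟨w, hwx, hnadj⟩ := hfull x
  obtain ⟨u, hu, hadj⟩ := hdom w (by simpa using hwx)
  rw [Set.mem_singleton_iff] at hu
  subst hu
  exact hnadj hadj.symm

lemma fds_split {V : Type*} [Fintype V] (G : SimpleGraph V)
    (hfull : ∀ v : V, ∃ w : V, w ≠ v ∧ ¬ G.Adj v w)
    (hV : Nonempty V)
    {D : Set V} (hD : IsFairDomSet G D) :
    ∃ Q : Finset (Set V), (∀ A ∈ Q, A.Nonempty) ∧
      (Q : Set (Set V)).PairwiseDisjoint id ∧ ⋃₀ (Q : Set (Set V)) = D ∧ 2 ≤ Q.card ∧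
      ∀ A ∈ Q, ¬ IsFairDomSet G A ∧
        ∃ B ∈ Q, B ≠ A ∧ ¬ IsFairDomSet G B ∧ IsFairDomSet G (A ∪ B) := by
  classical
  have hDne : D.Nonempty := by
    rcases Set.eq_empty_or_nonempty D with h | h
    · obtain ⟨v⟩ := hV
      obtain ⟨u, hu, -⟩ := hD.1 v (by simp [h])
      exact absurd hu (by simp [h])
    · exact h
  set T : Set ℕ :=
    {n : ℕ | ∃ S : Set V, S ⊆ D ∧ S.ncard = n ∧ (D \ S).Nonempty ∧
      ¬ IsFairDomSet G (D \ S)} with hT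
  obtain ⟨x, hxD⟩ := hDne
  have hmemT : (D \ {x}).ncard ∈ T := by
    refine ⟨D \ {x}, Set.diff_subset, rfl, ?_, ?_⟩
    · rw [Set.diff_diff_cancel_left (by simpa using hxD)]
      exact ⟨x, rfl⟩
    · rw [Set.diff_diff_cancel_left (by simpa using hxD)]
      exact singleton_not_fds G hfull x
  have hTne : T.Nonempty := ⟨_, hmemT⟩
  obtain ⟨S, hSD, hScard, hRne, hRnf⟩ := Nat.sInf_mem hTne
  have hs1 : 1 ≤ sInf T := by
    by_contra h
    have h0 : sInf T = 0 := by omega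
    rw [h0] at hScard
    have : S = ∅ := (Set.ncard_eq_zero (Set.toFinite S)).mp hScard
    rw [this, Set.diff_empty] at hRnf
    exact hRnf hD
  have hSne : S.Nonempty := by
    rw [← Set.ncard_pos]
    omega
  have hmin : ∀ y ∈ S, IsFairDomSet G (D \ (S \ {y})) := by
    intro y hy
    by_contra h
    have hmem : (S \ {y}).ncard ∈ T := by
      refine ⟨S \ {y}, (Set.diff_subset).trans hSD, rfl, ?_, h⟩
      exact hRne.mono (Set.diff_subset_diff_right Set.diff_subset)
    have := Nat.sInf_le hmem
    have hlt : (S \ {y}).ncard < S.ncard :=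
      Set.ncard_diff_singleton_lt_of_mem hy (Set.toFinite S)
    omega
  -- key set identity
  have hkey : ∀ y ∈ S, ({y} : Set V) ∪ (D \ S) = D \ (S \ {y}) := by
    intro y hy
    ext v
    simp only [Set.mem_union, Set.mem_singleton_iff, Set.mem_diff]
    constructor
    · rintro (rfl | ⟨hvD, hvS⟩)
      · exact ⟨hSD hy, fun h => h.2 rfl⟩
      · exact ⟨hvD, fun h => hvS h.1⟩
    · rintro ⟨hvD, hv⟩
      by_cases hvy : v = y
      · exact Or.inl hvy
      · refine Or.inr ⟨hvD, fun hvS => hv ⟨hvS, hvy⟩⟩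
  set R : Set V := D \ S with hR
  set Q : Finset (Set V) := insert R ((Set.toFinite S).toFinset.image
    fun y => ({y} : Set V)) with hQ
  have hmemQ : ∀ A, A ∈ Q ↔ A = R ∨ ∃ y ∈ S, A = {y} := by
    intro A
    simp only [hQ, Finset.mem_insert, Finset.mem_image, Set.Finite.mem_toFinset]
    tauto
  have hRnotsing : ∀ y ∈ S, R ≠ ({y} : Set V) := by
    intro y hy h
    have : y ∈ R := h ▸ rfl
    exact this.2 hy
  refine ⟨Q, ?_, ?_, ?_, ?_, ?_⟩
  · intro A hA
    rcases (hmemQ A).mp hA with rfl | ⟨y, hy, rfl⟩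
    · exact hRne
    · exact ⟨y, rfl⟩
  · intro A hA B hB hAB
    rw [Finset.mem_coe, hmemQ] at hA hB
    simp only [Function.onFun, id]
    rcases hA with rfl | ⟨y, hy, rfl⟩ <;> rcases hB with rfl | ⟨z, hz, rfl⟩
    · exact absurd rfl hAB
    · exact Set.disjoint_singleton_right.mpr (fun h => h.2 hz) |>.symm.symm
    · exact Set.disjoint_singleton_left.mpr (fun h => h.2 hy)
    · refine Set.disjoint_singleton_left.mpr ?_
      simp only [Set.mem_singleton_iff]
      intro h
      exact hAB (by rw [h])
  · ext v
    simp only [Set.mem_sUnion, Finset.mem_coe, hmemQ]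
    constructor
    · rintro ⟨A, (rfl | ⟨y, hy, rfl⟩), hv⟩
      · exact hv.1
      · rw [Set.mem_singleton_iff] at hv; exact hv ▸ hSD hy
    · intro hv
      by_cases hvS : v ∈ S
      · exact ⟨{v}, Or.inr ⟨v, hvS, rfl⟩, rfl⟩
      · exact ⟨R, Or.inl rfl, ⟨hv, hvS⟩⟩
  · have hnotmem : R ∉ (Set.toFinite S).toFinset.image (fun y => ({y} : Set V)) := by
      simp only [Finset.mem_image, Set.Finite.mem_toFinset]
      rintro ⟨y, hy, h⟩
      exact hRnotsing y hy h.symm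
    rw [hQ, Finset.card_insert_of_notMem hnotmem, Finset.card_image_of_injective _
      (fun a b h => Set.singleton_eq_singleton_iff.mp h)]
    have : 0 < (Set.toFinite S).toFinset.card := by
      rw [Finset.card_pos, Set.Finite.toFinset_nonempty]
      exact hSne
    omega
  · intro A hA
    rcases (hmemQ A).mp hA with rfl | ⟨y, hy, rfl⟩
    · obtain ⟨y, hy⟩ := hSne
      refine ⟨hRnf, {y}, (hmemQ _).mpr (Or.inr ⟨y, hy, rfl⟩), fun h => hRnotsing y hy h.symm, singleton_not_fds G hfull y, ?_⟩
      rw [Set.union_comm, hkey y hy]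
      exact hmin y hy
    · refine ⟨singleton_not_fds G hfull y, R, (hmemQ _).mpr (Or.inl rfl), hRnotsing y hy, hRnf, ?_⟩
      rw [hkey y hy]
      exact hmin y hy

theorem stmt_0 {V : Type*} [Fintype V] (G : SimpleGraph V)
    (hn : 3 ≤ Fintype.card V)
    (hfull : ∀ v : V, ∃ w : V, w ≠ v ∧ ¬ G.Adj v w) :
    2 * fairDomaticNumber G ≤ fairCoalitionNumber G := by
  classical
  have hV : Nonempty V := by
    rw [← Fintype.card_pos_iff]; omega
  -- the domatic set
  set Sd : Set ℕ := {n | ∃ P : Finset (Set V), IsFairDomaticPartition G P ∧ P.card = n}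
    with hSd
  have hSdne : Sd.Nonempty := by
    refine ⟨1, {Set.univ}, ⟨?_, ?_, ?_, ?_⟩, by simp⟩
    · intro A hA
      rw [Finset.mem_singleton] at hA
      subst hA
      exact Set.univ_nonempty
    · simp [Set.PairwiseDisjoint]
    · simp
    · intro A hA
      rw [Finset.mem_singleton] at hA
      subst hA
      exact ⟨fun v hv => absurd (Set.mem_univ v) hv, 1, le_refl 1,
        fun v hv => absurd (Set.mem_univ v) hv⟩
  have hSdbdd : BddAbove Sd := by
    refine ⟨Fintype.card (Set V), fun n hn => ?_⟩
    obtain ⟨P, -, rfl⟩ := hn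
    exact Finset.card_le_univ P
  have hSdmem : fairDomaticNumber G ∈ Sd := Nat.sSup_mem hSdne hSdbdd
  obtain ⟨P, hP, hPcard⟩ := hSdmem
  obtain ⟨hPne, hPdisj, hPun, hPfds⟩ := hP
  -- choose splits
  have key : ∀ A : Set V, ∃ Q : Finset (Set V), A ∈ P →
      ((∀ B ∈ Q, B.Nonempty) ∧
      (Q : Set (Set V)).PairwiseDisjoint id ∧ ⋃₀ (Q : Set (Set V)) = A ∧ 2 ≤ Q.card ∧
      ∀ B ∈ Q, ¬ IsFairDomSet G B ∧
        ∃ C ∈ Q, C ≠ B ∧ ¬ IsFairDomSet G C ∧ IsFairDomSet G (B ∪ C)) := by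
    intro A
    by_cases hA : A ∈ P
    · obtain ⟨Q, hQ⟩ := fds_split G hfull hV (hPfds A hA)
      exact ⟨Q, fun _ => hQ⟩
    · exact ⟨∅, fun h => absurd h hA⟩
  choose f hf using key
  have hsub : ∀ A ∈ P, ∀ B ∈ f A, B ⊆ A := by
    intro A hA B hB
    rw [← (hf A hA).2.2.1]
    exact Set.subset_sUnion_of_mem hB
  have hfdisj : ∀ A ∈ P, ∀ A' ∈ P, A ≠ A' → Disjoint (f A) (f A') := by
    intro A hA A' hA' hne
    rw [Finset.disjoint_left]
    intro B hB hB'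
    have h1 : B ⊆ A := hsub A hA B hB
    have h2 : B ⊆ A' := hsub A' hA' B hB'
    have hd : Disjoint A A' := hPdisj hA hA' hne
    obtain ⟨v, hv⟩ := (hf A hA).1 B hB
    exact Set.disjoint_left.mp hd (h1 hv) (h2 hv)
  set P' : Finset (Set V) := P.biUnion f with hP'
  have hmemP' : ∀ B, B ∈ P' ↔ ∃ A ∈ P, B ∈ f A := by
    intro B; simp [hP']
  have hcoal : IsFairCoalitionPartition G P' := by
    refine ⟨?_, ?_, ?_, ?_⟩
    · intro B hB
      obtain ⟨A, hA, hB⟩ := (hmemP' B).mp hB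
      exact (hf A hA).1 B hB
    · intro B hB C hC hne
      rw [Finset.mem_coe, hmemP'] at hB hC
      obtain ⟨A, hA, hB⟩ := hB
      obtain ⟨A', hA', hC⟩ := hC
      by_cases hAA : A = A'
      · subst hAA
        exact (hf A hA).2.1 hB hC hne
      · have hd : Disjoint A A' := hPdisj hA hA' hAA
        exact hd.mono (hsub A hA B hB) (hsub A' hA' C hC)
    · ext v
      simp only [Set.mem_sUnion, Finset.mem_coe, hmemP', Set.mem_univ, iff_true]
      have hv : v ∈ ⋃₀ (P : Set (Set V)) := by rw [hPun]; trivial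
      obtain ⟨A, hA, hvA⟩ := hv
      rw [Finset.mem_coe] at hA
      have : v ∈ ⋃₀ ((f A : Set (Set V))) := by
        rw [(hf A hA).2.2.1]; exact hvA
      obtain ⟨B, hB, hvB⟩ := this
      exact ⟨B, ⟨A, hA, hB⟩, hvB⟩
    · intro B hB
      obtain ⟨A, hA, hBA⟩ := (hmemP' B).mp hB
      obtain ⟨hBnf, C, hC, hCB, hCnf, hU⟩ := (hf A hA).2.2.2.2 B hBA
      exact Or.inr ⟨hBnf, C, (hmemP' C).mpr ⟨A, hA, hC⟩, hCB, hCnf, hU⟩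
  have hcard : 2 * P.card ≤ P'.card := by
    rw [hP', Finset.card_biUnion (fun A hA A' hA' h => hfdisj A hA A' hA' h)]
    calc 2 * P.card = ∑ _A ∈ P, 2 := by rw [Finset.sum_const, smul_eq_mul, mul_comm]
    _ ≤ ∑ A ∈ P, (f A).card := Finset.sum_le_sum fun A hA => (hf A hA).2.2.2.1
  have hmem : P'.card ∈ {n | ∃ P : Finset (Set V), IsFairCoalitionPartition G P ∧ P.card = n} :=
    ⟨P', hcoal, rfl⟩
  have hbdd : BddAbove {n | ∃ P : Finset (Set V), IsFairCoalitionPartition G P ∧ P.card = n} := by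
    refine ⟨Fintype.card (Set V), fun n hn => ?_⟩
    obtain ⟨P, -, rfl⟩ := hn
    exact Finset.card_le_univ P
  calc 2 * fairDomaticNumber G = 2 * P.card := by rw [hPcard]
  _ ≤ P'.card := hcard
  _ ≤ fairCoalitionNumber G := le_csSup hbdd hmem
end

section
/- For every integer k ≥ 2, the fair coalition number of the cycle graph C_{3k} on 3k vertices equals 6. -/
open SimpleGraph

namespace FCAux

open scoped Classical
open scoped Fin.CommRing Fin.NatCast

variable {n : ℕ} [NeZero n]

noncomputable def cnt (D : Set (Fin n)) (v : Fin n) : ℕ :=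
  (if v - 1 ∈ D then 1 else 0) + (if v + 1 ∈ D then 1 else 0)

def EO (D : Set (Fin n)) (v : Fin n) : Prop :=
  (v - 1 ∈ D ∧ v + 1 ∉ D) ∨ (v - 1 ∉ D ∧ v + 1 ∈ D)

lemma val_one (hn : 6 ≤ n) : (1 : Fin n).val = 1 := by
  rw [Fin.val_one']; exact Nat.mod_eq_of_lt (by omega)

lemma adj_iff (hn : 6 ≤ n) {u v : Fin n} :
    (cycleGraph n).Adj u v ↔ v = u + 1 ∨ v = u - 1 := by
  rw [cycleGraph_adj']
  have h1 : (u - v).val = 1 ↔ u - v = 1 := by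
    rw [Fin.ext_iff, val_one hn]
  have h2 : (v - u).val = 1 ↔ v - u = 1 := by
    rw [Fin.ext_iff, val_one hn]
  rw [h1, h2, sub_eq_iff_eq_add, sub_eq_iff_eq_add]
  constructor
  · rintro (h | h)
    · right; rw [h]; ring
    · left; rw [h]; ring
  · rintro (h | h)
    · right; rw [h]; ring
    · left; rw [h]; ring

lemma nbr_set (hn : 6 ≤ n) (v : Fin n) :
    (cycleGraph n).neighborSet v = {v - 1, v + 1} := by
  ext u
  rw [mem_neighborSet, adj_iff hn]
  simp [Set.mem_insert_iff, or_comm]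

lemma natCast_ne_zero (hn : 6 ≤ n) (j : ℕ) (h1 : 0 < j) (h2 : j < n) : (j : Fin n) ≠ 0 := by
  intro h
  have := congrArg Fin.val h
  rw [Fin.val_natCast, Fin.val_zero, Nat.mod_eq_of_lt h2] at this
  omega

lemma sub_ne_add (hn : 6 ≤ n) (v : Fin n) : v - 1 ≠ v + 1 := by
  intro h
  have h' : (-1 : Fin n) = 1 := by
    apply add_left_cancel (a := v)
    rw [← sub_eq_add_neg, h]
  have h2 : ((2 : ℕ) : Fin n) = 0 := by
    push_cast
    have : (2 : Fin n) = 1 + 1 := by norm_num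
    rw [this]
    nth_rewrite 1 [← h']
    exact neg_add_cancel 1
  exact natCast_ne_zero hn 2 (by omega) (by omega) h2

lemma offset_ne (hn : 6 ≤ n) (v : Fin n) (j : ℕ) (h1 : 0 < j) (h2 : j < n) :
    v + (j : Fin n) ≠ v := by
  intro h
  have h4 : v + (j : Fin n) = v + 0 := by rw [h, add_zero]
  exact natCast_ne_zero hn j h1 h2 (add_left_cancel h4)

lemma ncard_inter (hn : 6 ≤ n) (D : Set (Fin n)) (v : Fin n) :
    ((cycleGraph n).neighborSet v ∩ D).ncard = cnt D v := by
  rw [nbr_set hn]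
  have hne := sub_ne_add hn v
  by_cases h1 : v - 1 ∈ D <;> by_cases h2 : v + 1 ∈ D
  · have : ({v - 1, v + 1} : Set (Fin n)) ∩ D = {v - 1, v + 1} := by
      ext z; simp only [Set.mem_inter_iff, Set.mem_insert_iff, Set.mem_singleton_iff,
        and_iff_left_iff_imp]
      rintro (rfl | rfl) <;> assumption
    rw [this, Set.ncard_pair hne]
    simp [cnt, h1, h2]
  · have : ({v - 1, v + 1} : Set (Fin n)) ∩ D = {v - 1} := by
      ext z; simp only [Set.mem_inter_iff, Set.mem_insert_iff, Set.mem_singleton_iff]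
      constructor
      · rintro ⟨rfl | rfl, hz⟩
        · rfl
        · exact absurd hz h2
      · rintro rfl; exact ⟨Or.inl rfl, h1⟩
    rw [this, Set.ncard_singleton]
    simp [cnt, h1, h2]
  · have : ({v - 1, v + 1} : Set (Fin n)) ∩ D = {v + 1} := by
      ext z; simp only [Set.mem_inter_iff, Set.mem_insert_iff, Set.mem_singleton_iff]
      constructor
      · rintro ⟨rfl | rfl, hz⟩
        · exact absurd hz h1
        · rfl
      · rintro rfl; exact ⟨Or.inr rfl, h2⟩
    rw [this, Set.ncard_singleton]
    simp [cnt, h1, h2]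
  · have : ({v - 1, v + 1} : Set (Fin n)) ∩ D = ∅ := by
      ext z; simp only [Set.mem_inter_iff, Set.mem_insert_iff, Set.mem_singleton_iff,
        Set.mem_empty_iff_false, iff_false, not_and]
      rintro (rfl | rfl) <;> assumption
    rw [this, Set.ncard_empty]
    simp [cnt, h1, h2]

lemma fair_cnt (hn : 6 ≤ n) {D : Set (Fin n)} (h : IsFairDomSet (cycleGraph n) D) :
    ∃ j, 1 ≤ j ∧ ∀ v ∉ D, cnt D v = j := by
  obtain ⟨-, j, hj1, hj⟩ := h
  exact ⟨j, hj1, fun v hv => (ncard_inter hn D v).symm.trans (hj v hv)⟩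

lemma cnt_le_two (D : Set (Fin n)) (v : Fin n) : cnt D v ≤ 2 := by
  unfold cnt; split <;> split <;> omega

lemma cnt_eq_one_iff {D : Set (Fin n)} {v : Fin n} : cnt D v = 1 ↔ EO D v := by
  unfold cnt EO
  by_cases h1 : v - 1 ∈ D <;> by_cases h2 : v + 1 ∈ D <;> simp [h1, h2]

lemma cnt_eq_two_iff {D : Set (Fin n)} {v : Fin n} : cnt D v = 2 ↔ (v - 1 ∈ D ∧ v + 1 ∈ D) := by
  unfold cnt
  by_cases h1 : v - 1 ∈ D <;> by_cases h2 : v + 1 ∈ D <;> simp [h1, h2]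

lemma fair_dom' (hn : 6 ≤ n) {D : Set (Fin n)} (h : IsFairDomSet (cycleGraph n) D)
    {v : Fin n} (hv : v ∉ D) : v - 1 ∈ D ∨ v + 1 ∈ D := by
  obtain ⟨j, hj1, hj⟩ := fair_cnt hn h
  have := hj v hv
  by_contra hc
  push_neg at hc
  simp [cnt, hc.1, hc.2] at this
  omega

lemma fair_EO (hn : 6 ≤ n) {D : Set (Fin n)} (hf : IsFairDomSet (cycleGraph n) D)
    {w : Fin n} (hw : w ∉ D) (hEO : EO D w) : ∀ z ∉ D, EO D z := by
  obtain ⟨j, hj1, hj⟩ := fair_cnt hn hf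
  have hw1 : j = 1 := by rw [← hj w hw]; exact cnt_eq_one_iff.mpr hEO
  intro z hz
  exact cnt_eq_one_iff.mp (hw1 ▸ hj z hz)

lemma window (hn : 6 ≤ n) {D : Set (Fin n)} (h : IsFairDomSet (cycleGraph n) D)
    (v : Fin n) : v ∈ D ∨ v + 1 ∈ D ∨ v + 2 ∈ D := by
  by_cases h1 : v + 1 ∈ D
  · exact Or.inr (Or.inl h1)
  · have := fair_dom' hn h h1
    have e1 : v + 1 - 1 = v := by ring
    have e2 : v + 1 + 1 = v + 2 := by ring
    rw [e1, e2] at this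
    rcases this with h' | h'
    · exact Or.inl h'
    · exact Or.inr (Or.inr h')

lemma fair_of_EO (hn : 6 ≤ n) {D : Set (Fin n)} (h : ∀ v ∉ D, EO D v) :
    IsFairDomSet (cycleGraph n) D := by
  constructor
  · intro v hv
    rcases h v hv with ⟨h1, -⟩ | ⟨-, h2⟩
    · exact ⟨v - 1, h1, (adj_iff hn).mpr (Or.inr rfl)⟩
    · exact ⟨v + 1, h2, (adj_iff hn).mpr (Or.inl rfl)⟩
  · exact ⟨1, le_refl 1, fun v hv => (ncard_inter hn D v).trans (cnt_eq_one_iff.mpr (h v hv))⟩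

local notation "fair" => IsFairDomSet (cycleGraph n)

lemma W2L (hn : 6 ≤ n) {M N : Set (Fin n)} (hM : fair M) (hN : fair N)
    (hMN : Disjoint M N) {v : Fin n} (hvM : v ∉ M) (hvN : v ∉ N) :
    ∃ ε : Fin n, (ε = 1 ∨ ε = -1) ∧ v - ε ∈ M ∧ v + ε ∈ N := by
  rcases fair_dom' hn hM hvM with h1 | h1
  · have h1N : v - 1 ∉ N := Set.disjoint_left.mp hMN h1
    have h2 : v + 1 ∈ N := by
      rcases fair_dom' hn hN hvN with h | h
      · exact absurd h h1N
      · exact h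
    exact ⟨1, Or.inl rfl, h1, h2⟩
  · have h1N : v + 1 ∉ N := Set.disjoint_left.mp hMN h1
    have h2 : v - 1 ∈ N := by
      rcases fair_dom' hn hN hvN with h | h
      · exact h
      · exact absurd h h1N
    refine ⟨-1, Or.inr rfl, ?_, ?_⟩
    · rwa [sub_neg_eq_add]
    · rwa [← sub_eq_add_neg]

lemma E1gen (hn : 6 ≤ n) {M N X t : Set (Fin n)} (hMN : Disjoint M N)
    (hM : fair M) (hN : fair N) (htM : t ⊆ M) (hXM : Disjoint X M) (hXN : Disjoint X N)
    (hft : fair (X ∪ t)) {v : Fin n} (hvM : v ∉ M) (hvN : v ∉ N) (hvX : v ∉ X)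
    {w : Fin n} (hw : w = v - 1 ∨ w = v + 1) (hwM : w ∈ M) : w ∈ t := by
  obtain ⟨ε, hε, hMε, hNε⟩ := W2L hn hM hN hMN hvM hvN
  have hvXt : v ∉ X ∪ t := by
    rintro (h | h)
    · exact hvX h
    · exact hvM (htM h)
  have hNnotXt : v + ε ∉ X ∪ t := by
    rintro (h | h)
    · exact Set.disjoint_left.mp hXN h hNε
    · exact Set.disjoint_left.mp hMN (htM h) hNε
  have hdom := fair_dom' hn hft hvXt
  rcases hε with rfl | rfl
  · -- ε = 1 : v - 1 ∈ M, v + 1 ∈ N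
    have hsub : v - 1 ∈ X ∪ t := by
      rcases hdom with h | h
      · exact h
      · exact absurd h hNnotXt
    have hw' : w = v - 1 := by
      rcases hw with rfl | rfl
      · rfl
      · exact absurd hwM (Set.disjoint_left.mp hMN.symm hNε)
    subst hw'
    rcases hsub with h | h
    · exact absurd hwM (Set.disjoint_left.mp hXM h)
    · exact h
  · -- ε = -1 : v + 1 ∈ M, v - 1 ∈ N
    rw [sub_neg_eq_add] at hMε
    rw [← sub_eq_add_neg] at hNε
    have hNnotXt' : v - 1 ∉ X ∪ t := by rwa [sub_eq_add_neg]
    have hsub : v + 1 ∈ X ∪ t := by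
      rcases hdom with h | h
      · exact absurd h hNnotXt'
      · exact h
    have hw' : w = v + 1 := by
      rcases hw with rfl | rfl
      · exact absurd hwM (Set.disjoint_left.mp hMN.symm hNε)
      · rfl
    subst hw'
    rcases hsub with h | h
    · exact absurd hwM (Set.disjoint_left.mp hXM h)
    · exact h

lemma singleton_not_fair (hn : 6 ≤ n) (v : Fin n) : ¬ fair {v} := by
  intro h
  have hw := window hn h (v + 2)
  have e1 : v + 2 + 1 = v + 3 := by ring
  have e2 : v + 2 + 2 = v + 4 := by ring
  rw [e1, e2] at hw
  have c2 : ((2 : ℕ) : Fin n) = (2 : Fin n) := by push_cast; rfl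
  have c3 : ((3 : ℕ) : Fin n) = (3 : Fin n) := by push_cast; rfl
  have c4 : ((4 : ℕ) : Fin n) = (4 : Fin n) := by push_cast; rfl
  rcases hw with h' | h' | h'
  · rw [Set.mem_singleton_iff] at h'
    exact offset_ne hn v 2 (by omega) (by omega) (c2 ▸ h')
  · rw [Set.mem_singleton_iff] at h'
    exact offset_ne hn v 3 (by omega) (by omega) (c3 ▸ h')
  · rw [Set.mem_singleton_iff] at h'
    exact offset_ne hn v 4 (by omega) (by omega) (c4 ▸ h')

lemma pigeon {x y z : Fin n} {B1 B2 B3 B4 : Set (Fin n)}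
    (h12 : Disjoint B1 B2) (h13 : Disjoint B1 B3) (h14 : Disjoint B1 B4)
    (h23 : Disjoint B2 B3) (h24 : Disjoint B2 B4) (h34 : Disjoint B3 B4)
    (m1 : x ∈ B1 ∨ y ∈ B1 ∨ z ∈ B1) (m2 : x ∈ B2 ∨ y ∈ B2 ∨ z ∈ B2)
    (m3 : x ∈ B3 ∨ y ∈ B3 ∨ z ∈ B3) (m4 : x ∈ B4 ∨ y ∈ B4 ∨ z ∈ B4) : False := by
  rcases m1 with m1 | m1 | m1 <;> rcases m2 with m2 | m2 | m2 <;>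
    rcases m3 with m3 | m3 | m3 <;> rcases m4 with m4 | m4 | m4 <;>
    first
      | exact Set.disjoint_left.mp h12 m1 m2
      | exact Set.disjoint_left.mp h13 m1 m3
      | exact Set.disjoint_left.mp h14 m1 m4
      | exact Set.disjoint_left.mp h23 m2 m3
      | exact Set.disjoint_left.mp h24 m2 m4
      | exact Set.disjoint_left.mp h34 m3 m4

lemma D3' (hn : 6 ≤ n) {A B1 B2 B3 B4 : Set (Fin n)} (hA : ¬ fair A)
    (h12 : Disjoint B1 B2) (h13 : Disjoint B1 B3) (h14 : Disjoint B1 B4)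
    (h23 : Disjoint B2 B3) (h24 : Disjoint B2 B4) (h34 : Disjoint B3 B4)
    (hf1 : fair (A ∪ B1)) (hf2 : fair (A ∪ B2)) (hf3 : fair (A ∪ B3))
    (hf4 : fair (A ∪ B4)) : False := by
  by_cases hbig : ∀ v : Fin n, v ∈ A ∨ v + 1 ∈ A ∨ v + 2 ∈ A
  · -- A meets every window, so A is dominating
    have hdom : ∀ v : Fin n, v ∉ A → v - 1 ∈ A ∨ v + 1 ∈ A := by
      intro v hv
      have := hbig (v - 1)
      have e1 : v - 1 + 1 = v := by ring
      have e2 : v - 1 + 2 = v + 1 := by ring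
      rw [e1, e2] at this
      rcases this with h | h | h
      · exact Or.inl h
      · exact absurd h hv
      · exact Or.inr h
    -- A is not fair, so counts are not uniform: get x with cnt 2 and y with cnt 1
    have hADom : ∀ v ∉ A, ∃ u ∈ A, (cycleGraph n).Adj v u := by
      intro v hv
      rcases hdom v hv with h | h
      · exact ⟨v - 1, h, (adj_iff hn).mpr (Or.inr rfl)⟩
      · exact ⟨v + 1, h, (adj_iff hn).mpr (Or.inl rfl)⟩
    have hnonunif : ¬ ∃ j : ℕ, 1 ≤ j ∧ ∀ v ∉ A, ((cycleGraph n).neighborSet v ∩ A).ncard = j := by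
      intro hj
      exact hA ⟨hADom, hj⟩
    push_neg at hnonunif
    obtain ⟨x, hxA, hx1⟩ := hnonunif 1 (le_refl 1)
    obtain ⟨y, hyA, hy2⟩ := hnonunif 2 (by omega)
    rw [ncard_inter hn] at hx1 hy2
    have hxcnt : cnt A x = 2 := by
      have h1 : 1 ≤ cnt A x := by
        rcases hdom x hxA with h | h <;> unfold cnt <;> simp [h] <;> omega
      have := cnt_le_two A x
      omega
    have hycnt : cnt A y = 1 := by
      have h1 : 1 ≤ cnt A y := by
        rcases hdom y hyA with h | h <;> unfold cnt <;> simp [h] <;> omega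
      have := cnt_le_two A y
      omega
    obtain ⟨hxm, hxp⟩ := cnt_eq_two_iff.mp hxcnt
    -- y has exactly one neighbor in A; get the side ε with y + ε ∉ A
    obtain ⟨ε, hε, hyin, hyout⟩ :
        ∃ ε : Fin n, (ε = 1 ∨ ε = -1) ∧ y - ε ∈ A ∧ y + ε ∉ A := by
      rcases cnt_eq_one_iff.mp hycnt with ⟨h1, h2⟩ | ⟨h1, h2⟩
      · exact ⟨1, Or.inl rfl, h1, h2⟩
      · refine ⟨-1, Or.inr rfl, ?_, ?_⟩
        · rwa [sub_neg_eq_add]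
        · rwa [← sub_eq_add_neg]
    set y' := y + ε with hy'
    -- each Bi contains x, y or y'
    have key : ∀ B : Set (Fin n), fair (A ∪ B) → x ∈ B ∨ y ∈ B ∨ y' ∈ B := by
      intro B hfB
      by_contra hc
      push_neg at hc
      obtain ⟨hxB, hyB, hy'B⟩ := hc
      obtain ⟨j, hj1, hj⟩ := fair_cnt hn hfB
      have hxAB : x ∉ A ∪ B := by rintro (h | h); exacts [hxA h, hxB h]
      have hyAB : y ∉ A ∪ B := by rintro (h | h); exacts [hyA h, hyB h]
      have hj2 : j = 2 := by
        have := hj x hxAB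
        have h2 : cnt (A ∪ B) x = 2 :=
          cnt_eq_two_iff.mpr ⟨Or.inl hxm, Or.inl hxp⟩
        omega
      have := cnt_eq_two_iff.mp (hj2 ▸ hj y hyAB)
      have hyε : y + ε ∈ A ∪ B := by
        rcases hε with rfl | rfl
        · exact this.2
        · rw [← sub_eq_add_neg]; exact this.1
      rcases hyε with h | h
      · exact hyout h
      · exact hy'B h
    exact pigeon h12 h13 h14 h23 h24 h34 (key B1 hf1) (key B2 hf2) (key B3 hf3) (key B4 hf4)
  · push_neg at hbig
    obtain ⟨v, hv0, hv1, hv2⟩ := hbig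
    have key : ∀ B : Set (Fin n), fair (A ∪ B) → v ∈ B ∨ v + 1 ∈ B ∨ v + 2 ∈ B := by
      intro B hfB
      rcases window hn hfB v with (h | h) | (h | h) | (h | h)
      · exact absurd h hv0
      · exact Or.inl h
      · exact absurd h hv1
      · exact Or.inr (Or.inl h)
      · exact absurd h hv2
      · exact Or.inr (Or.inr h)
    exact pigeon h12 h13 h14 h23 h24 h34 (key B1 hf1) (key B2 hf2) (key B3 hf3) (key B4 hf4)

lemma val_two (hn : 6 ≤ n) : (2 : Fin n).val = 2 := by
  have c2 : ((2 : ℕ) : Fin n) = (2 : Fin n) := by push_cast; rfl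
  rw [← c2, Fin.val_natCast, Nat.mod_eq_of_lt (by omega)]

lemma SZ (hn : 6 ≤ n) {kk : ℕ} (hkn : 3 * kk ≤ n) {D : Set (Fin n)}
    (hf : fair D) : kk ≤ D.ncard := by
  have hchoice : ∀ i : Fin kk, ∃ d : Fin n, d ∈ D ∧ 3 * i.val ≤ d.val ∧ d.val ≤ 3 * i.val + 2 := by
    intro i
    have hi : i.val < kk := i.isLt
    have h3i : 3 * i.val < n := by omega
    set c : Fin n := ⟨3 * i.val, h3i⟩ with hc
    have hval1 : (c + 1).val = 3 * i.val + 1 := by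
      rw [Fin.add_def]
      simp only [val_one hn]
      exact Nat.mod_eq_of_lt (show 3 * i.val + 1 < n by omega)
    have hval2 : (c + 2).val = 3 * i.val + 2 := by
      rw [Fin.add_def]
      simp only [val_two hn]
      exact Nat.mod_eq_of_lt (show 3 * i.val + 2 < n by omega)
    rcases window hn hf c with h | h | h
    · exact ⟨c, h, by simp [hc], by simp [hc]⟩
    · exact ⟨c + 1, h, by omega, by omega⟩
    · exact ⟨c + 2, h, by omega, by omega⟩
  choose f hfD hfl hfu using hchoice
  have hinj : Set.InjOn f ↑(Finset.univ : Finset (Fin kk)) := by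
    intro i _ j _ hij
    have h1 := hfl i; have h2 := hfu i
    have h3 := hfl j; have h4 := hfu j
    rw [hij] at h1 h2
    have : i.val = j.val := by omega
    exact Fin.ext this
  have hmap : ∀ i ∈ (Finset.univ : Finset (Fin kk)), f i ∈ D.toFinset := by
    intro i _
    simpa using hfD i
  have := Finset.card_le_card_of_injOn f hmap hinj
  simpa [Set.ncard_eq_toFinset_card'] using this

lemma no3 (hn : 6 ≤ n) {kk : ℕ} (hkn : n ≤ 3 * kk) {s t u e : Set (Fin n)}
    (hs : kk ≤ s.ncard) (ht : kk ≤ t.ncard) (hu : kk ≤ u.ncard) (he : e.Nonempty)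
    (hst : Disjoint s t) (hsu : Disjoint s u) (hse : Disjoint s e)
    (htu : Disjoint t u) (hte : Disjoint t e) (hue : Disjoint u e) : False := by
  have hfin : ∀ w : Set (Fin n), w.Finite := fun w => w.toFinite
  have htot : (s ∪ t ∪ u ∪ e).ncard ≤ n := by
    have h1 : (s ∪ t ∪ u ∪ e).ncard ≤ (Set.univ : Set (Fin n)).ncard :=
      Set.ncard_le_ncard (Set.subset_univ _) Set.finite_univ
    rwa [Set.ncard_univ, Nat.card_eq_fintype_card, Fintype.card_fin] at h1
  have hd1 : Disjoint (s ∪ t) u := Set.disjoint_union_left.mpr ⟨hsu, htu⟩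
  have hd2 : Disjoint (s ∪ t ∪ u) e :=
    Set.disjoint_union_left.mpr ⟨Set.disjoint_union_left.mpr ⟨hse, hte⟩, hue⟩
  rw [Set.ncard_union_eq hd2 (hfin _) (hfin _), Set.ncard_union_eq hd1 (hfin _) (hfin _),
    Set.ncard_union_eq hst (hfin _) (hfin _)] at htot
  have hepos : 0 < e.ncard := (Set.ncard_pos (hfin e)).mpr he
  omega

lemma EO_eps {D : Set (Fin n)} {v ε : Fin n} (hε : ε = 1 ∨ ε = -1) :
    EO D v ↔ ((v - ε ∈ D ∧ v + ε ∉ D) ∨ (v - ε ∉ D ∧ v + ε ∈ D)) := by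
  rcases hε with rfl | rfl
  · rfl
  · unfold EO
    rw [sub_neg_eq_add, ← sub_eq_add_neg]
    tauto

lemma FINAL (hn : 6 ≤ n) {a b c d X1 X2 X3 : Set (Fin n)}
    (dab : Disjoint a b) (dac : Disjoint a c) (dad : Disjoint a d)
    (dbc : Disjoint b c) (dbd : Disjoint b d) (dcd : Disjoint c d)
    (d1a : Disjoint X1 a) (d1b : Disjoint X1 b) (d1c : Disjoint X1 c) (d1d : Disjoint X1 d)
    (d2a : Disjoint X2 a) (d2b : Disjoint X2 b) (d2c : Disjoint X2 c) (d2d : Disjoint X2 d)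
    (d3a : Disjoint X3 a) (d3b : Disjoint X3 b) (d3c : Disjoint X3 c) (d3d : Disjoint X3 d)
    (d12 : Disjoint X1 X2) (d13 : Disjoint X1 X3) (d23 : Disjoint X2 X3)
    (hb : b.Nonempty) (h1 : X1.Nonempty) (h2 : X2.Nonempty)
    (fab : fair (a ∪ b)) (fcd : fair (c ∪ d)) (f1 : fair (X1 ∪ a))
    (f2 : fair (X2 ∪ a)) (f3 : fair (X3 ∪ c)) : False := by
  have hMN : Disjoint (a ∪ b) (c ∪ d) := by
    rw [Set.disjoint_union_left]
    exact ⟨Set.disjoint_union_right.mpr ⟨dac, dad⟩, Set.disjoint_union_right.mpr ⟨dbc, dbd⟩⟩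
  have d1M : Disjoint X1 (a ∪ b) := Set.disjoint_union_right.mpr ⟨d1a, d1b⟩
  have d1N : Disjoint X1 (c ∪ d) := Set.disjoint_union_right.mpr ⟨d1c, d1d⟩
  have d2M : Disjoint X2 (a ∪ b) := Set.disjoint_union_right.mpr ⟨d2a, d2b⟩
  have d2N : Disjoint X2 (c ∪ d) := Set.disjoint_union_right.mpr ⟨d2c, d2d⟩
  have d3M : Disjoint X3 (a ∪ b) := Set.disjoint_union_right.mpr ⟨d3a, d3b⟩
  have d3N : Disjoint X3 (c ∪ d) := Set.disjoint_union_right.mpr ⟨d3c, d3d⟩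
  -- hA : any neighbor in a∪b of an outside vertex is in a
  have hA : ∀ v : Fin n, v ∉ a ∪ b → v ∉ c ∪ d →
      ∀ w : Fin n, (w = v - 1 ∨ w = v + 1) → w ∈ a ∪ b → w ∈ a := by
    intro v hvM hvN w hw hwM
    by_cases hvX : v ∈ X1
    · have hvX2 : v ∉ X2 := Set.disjoint_left.mp d12 hvX
      exact E1gen hn hMN fab fcd Set.subset_union_left d2M d2N f2 hvM hvN hvX2 hw hwM
    · exact E1gen hn hMN fab fcd Set.subset_union_left d1M d1N f1 hvM hvN hvX hw hwM
  -- hC : any neighbor in c∪d of an outside vertex not in X3 is in c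
  have hC : ∀ v : Fin n, v ∉ a ∪ b → v ∉ c ∪ d → v ∉ X3 →
      ∀ w : Fin n, (w = v - 1 ∨ w = v + 1) → w ∈ c ∪ d → w ∈ c := by
    intro v hvM hvN hvX w hw hwN
    exact E1gen hn hMN.symm fcd fab Set.subset_union_left d3N d3M f3 hvN hvM hvX hw hwN
  -- witness w1 ∈ X1
  obtain ⟨w1, hw1⟩ := h1
  have hw1M : w1 ∉ a ∪ b := Set.disjoint_left.mp d1M hw1
  have hw1N : w1 ∉ c ∪ d := Set.disjoint_left.mp d1N hw1
  have hw1X3 : w1 ∉ X3 := Set.disjoint_left.mp d13 hw1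
  have hw1X2 : w1 ∉ X2 := Set.disjoint_left.mp d12 hw1
  obtain ⟨δ, hδ, hA1, hC1⟩ := W2L hn fab fcd hMN hw1M hw1N
  have hδnbr : w1 - δ = w1 - 1 ∨ w1 - δ = w1 + 1 := by
    rcases hδ with rfl | rfl
    · exact Or.inl rfl
    · exact Or.inr (by rw [sub_neg_eq_add])
  have hδnbr' : w1 + δ = w1 - 1 ∨ w1 + δ = w1 + 1 := by
    rcases hδ with rfl | rfl
    · exact Or.inr rfl
    · exact Or.inl (by rw [← sub_eq_add_neg])
  have hA1a : w1 - δ ∈ a := hA w1 hw1M hw1N _ hδnbr hA1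
  have hC1c : w1 + δ ∈ c := hC w1 hw1M hw1N hw1X3 _ hδnbr' hC1
  -- uniformity instances
  have EOM : ∀ z, z ∉ a ∪ b → EO (a ∪ b) z := by
    have : EO (a ∪ b) w1 := (EO_eps hδ).mpr (Or.inl ⟨hA1, Set.disjoint_left.mp hMN.symm hC1⟩)
    exact fun z hz => fair_EO hn fab hw1M this z hz
  have EO1 : ∀ z, z ∉ X1 ∪ a → EO (X1 ∪ a) z := by
    obtain ⟨w2, hw2⟩ := h2
    have hw2M : w2 ∉ a ∪ b := Set.disjoint_left.mp d2M hw2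
    have hw2N : w2 ∉ c ∪ d := Set.disjoint_left.mp d2N hw2
    obtain ⟨δ2, hδ2, hA2, hC2⟩ := W2L hn fab fcd hMN hw2M hw2N
    have hδ2nbr : w2 - δ2 = w2 - 1 ∨ w2 - δ2 = w2 + 1 := by
      rcases hδ2 with rfl | rfl
      · exact Or.inl rfl
      · exact Or.inr (by rw [sub_neg_eq_add])
    have hA2a : w2 - δ2 ∈ a := hA w2 hw2M hw2N _ hδ2nbr hA2
    have hw2D : w2 ∉ X1 ∪ a := by
      rintro (h | h)
      · exact Set.disjoint_left.mp d12 h hw2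
      · exact hw2M (Or.inl h)
    have hNout : w2 + δ2 ∉ X1 ∪ a := by
      rintro (h | h)
      · exact Set.disjoint_left.mp d1N h hC2
      · exact Set.disjoint_left.mp hMN (Or.inl h) hC2
    have : EO (X1 ∪ a) w2 := (EO_eps hδ2).mpr (Or.inl ⟨Or.inr hA2a, hNout⟩)
    exact fun z hz => fair_EO hn f1 hw2D this z hz
  have EO2 : ∀ z, z ∉ X2 ∪ a → EO (X2 ∪ a) z := by
    have hw1D : w1 ∉ X2 ∪ a := by
      rintro (h | h)
      · exact hw1X2 h
      · exact hw1M (Or.inl h)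
    have hNout : w1 + δ ∉ X2 ∪ a := by
      rintro (h | h)
      · exact Set.disjoint_left.mp d2c h hC1c
      · exact Set.disjoint_left.mp dac h hC1c
    have : EO (X2 ∪ a) w1 := (EO_eps hδ).mpr (Or.inl ⟨Or.inr hA1a, hNout⟩)
    exact fun z hz => fair_EO hn f2 hw1D this z hz
  have EO3 : ∀ z, z ∉ X3 ∪ c → EO (X3 ∪ c) z := by
    have hw1D : w1 ∉ X3 ∪ c := by
      rintro (h | h)
      · exact hw1X3 h
      · exact hw1N (Or.inl h)
    have hMout : w1 - δ ∉ X3 ∪ c := by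
      rintro (h | h)
      · exact Set.disjoint_left.mp d3a h hA1a
      · exact Set.disjoint_left.mp dac hA1a h
    have : EO (X3 ∪ c) w1 := (EO_eps hδ).mpr (Or.inr ⟨hMout, Or.inr hC1c⟩)
    exact fun z hz => fair_EO hn f3 hw1D this z hz
  have EON : ∀ z, z ∉ c ∪ d → EO (c ∪ d) z := by
    have : EO (c ∪ d) w1 := (EO_eps hδ).mpr (Or.inr ⟨Set.disjoint_left.mp hMN hA1, hC1⟩)
    exact fun z hz => fair_EO hn fcd hw1N this z hz
  -- the chase at u ∈ b
  obtain ⟨u, hub⟩ := hb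
  have huM : u ∈ a ∪ b := Or.inr hub
  have huN : u ∉ c ∪ d := by
    rintro (h | h)
    · exact Set.disjoint_left.mp dbc hub h
    · exact Set.disjoint_left.mp dbd hub h
  have huD1 : u ∉ X1 ∪ a := by
    rintro (h | h)
    · exact Set.disjoint_left.mp d1b h hub
    · exact Set.disjoint_left.mp dab h hub
  have huD2 : u ∉ X2 ∪ a := by
    rintro (h | h)
    · exact Set.disjoint_left.mp d2b h hub
    · exact Set.disjoint_left.mp dab h hub
  have huD3 : u ∉ X3 ∪ c := by
    rintro (h | h)
    · exact Set.disjoint_left.mp d3b h hub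
    · exact Set.disjoint_left.mp dbc hub h
  obtain ⟨ε, hε, hyN, hxN⟩ :
      ∃ ε : Fin n, (ε = 1 ∨ ε = -1) ∧ u + ε ∈ c ∪ d ∧ u - ε ∉ c ∪ d := by
    rcases EON u huN with ⟨hin, hout⟩ | ⟨hout, hin⟩
    · refine ⟨-1, Or.inr rfl, ?_, ?_⟩
      · rwa [← sub_eq_add_neg]
      · rwa [sub_neg_eq_add]
    · exact ⟨1, Or.inl rfl, hin, hout⟩
  set y := u + ε with hy
  set x := u - ε with hx
  have hxy_nbrs_x : x = u - 1 ∨ x = u + 1 := by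
    rcases hε with rfl | rfl
    · exact Or.inl rfl
    · exact Or.inr (by rw [hx, sub_neg_eq_add])
  have hxy_nbrs_y : y = u - 1 ∨ y = u + 1 := by
    rcases hε with rfl | rfl
    · exact Or.inr rfl
    · exact Or.inl (by rw [hy, ← sub_eq_add_neg])
  -- x ∈ a∪b
  have hxM : x ∈ a ∪ b := by
    by_contra hxM
    have hu_of_x : u = x - 1 ∨ u = x + 1 := by
      rcases hε with rfl | rfl
      · exact Or.inr (by rw [hx, sub_add_cancel])
      · exact Or.inl (by rw [hx, sub_neg_eq_add, add_sub_cancel_right])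
    have := hA x hxM hxN u hu_of_x huM
    exact Set.disjoint_left.mp dab this hub
  -- x ∈ X1 ∪ a hence x ∈ a
  have hyND1 : y ∉ X1 ∪ a := by
    rintro (h | h)
    · exact Set.disjoint_left.mp d1N h hyN
    · exact Set.disjoint_left.mp hMN (Or.inl h) hyN
  have hxD1 : x ∈ X1 ∪ a := by
    rcases (EO_eps hε).mp (EO1 u huD1) with ⟨hin, -⟩ | ⟨-, hin⟩
    · exact hin
    · exact absurd hin hyND1
  have hxa : x ∈ a := by
    rcases hxD1 with h | h
    · exact absurd hxM (Set.disjoint_left.mp d1M h)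
    · exact h
  -- y ∈ X3 ∪ c hence y ∈ c
  have hxnD3 : x ∉ X3 ∪ c := by
    rintro (h | h)
    · exact Set.disjoint_left.mp d3a h hxa
    · exact Set.disjoint_left.mp dac hxa h
  have hyD3 : y ∈ X3 ∪ c := by
    rcases (EO_eps hε).mp (EO3 u huD3) with ⟨hin, -⟩ | ⟨-, hin⟩
    · exact absurd hin hxnD3
    · exact hin
  have hyc : y ∈ c := by
    rcases hyD3 with h | h
    · exact absurd hyN (Set.disjoint_left.mp d3N h)
    · exact h
  -- t := y + ε
  set tt := y + ε with htt
  have hy_nD1 : y ∉ X1 ∪ a := hyND1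
  have hy_nD2 : y ∉ X2 ∪ a := by
    rintro (h | h)
    · exact Set.disjoint_left.mp d2c h hyc
    · exact Set.disjoint_left.mp dac h hyc
  have hy_nM : y ∉ a ∪ b := by
    rintro (h | h)
    · exact Set.disjoint_left.mp dac h hyc
    · exact Set.disjoint_left.mp dbc h hyc
  have hysub : y - ε = u := by rw [hy, add_sub_cancel_right]
  have hu_nD1 : u ∉ X1 ∪ a := huD1
  have httD1 : tt ∈ X1 ∪ a := by
    rcases (EO_eps hε).mp (EO1 y hy_nD1) with ⟨hin, -⟩ | ⟨-, hin⟩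
    · rw [hysub] at hin; exact absurd hin hu_nD1
    · exact hin
  have httD2 : tt ∈ X2 ∪ a := by
    rcases (EO_eps hε).mp (EO2 y hy_nD2) with ⟨hin, -⟩ | ⟨-, hin⟩
    · rw [hysub] at hin; exact absurd hin huD2
    · exact hin
  have htta : tt ∈ a := by
    rcases httD1 with h | h
    · rcases httD2 with h' | h'
      · exact absurd h' (Set.disjoint_left.mp d12 h)
      · exact h'
    · exact h
  -- contradiction with EO of a∪b at y
  rcases (EO_eps hε).mp (EOM y hy_nM) with ⟨-, hout⟩ | ⟨hout, -⟩
  · exact hout (Or.inl htta)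
  · rw [hysub] at hout
    exact hout huM

lemma lower (k : ℕ) (hk : 2 ≤ k) :
    ∃ P : Finset (Set (Fin (3*k))),
      IsFairCoalitionPartition (cycleGraph (3*k)) P ∧ P.card = 6 := by
  haveI : NeZero (3*k) := ⟨by omega⟩
  set n := 3*k with hn3
  have hn : 6 ≤ n := by omega
  set f : Fin n → Fin 6 := fun v =>
    if v.val < 3 then (⟨v.val % 3, by omega⟩ : Fin 6) else ⟨3 + v.val % 3, by omega⟩ with hf
  have hsurj : ∀ i : Fin 6, ∃ v : Fin n, f v = i := by
    intro i
    by_cases hi : i.val < 3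
    · refine ⟨⟨i.val, by omega⟩, ?_⟩
      simp only [hf]
      rw [if_pos (by simpa using hi)]
      simp [Fin.ext_iff]
      omega
    · refine ⟨⟨i.val, by omega⟩, ?_⟩
      simp only [hf]
      rw [if_neg (by simpa using hi)]
      simp [Fin.ext_iff]
      omega
  have hinj : Function.Injective (fun i : Fin 6 => f ⁻¹' {i}) := by
    intro i j hij
    have hij' : f ⁻¹' {i} = f ⁻¹' {j} := hij
    obtain ⟨v, hv⟩ := hsurj i
    have hvi : v ∈ f ⁻¹' {i} := by simp [hv]
    rw [hij'] at hvi
    simp only [Set.mem_preimage, Set.mem_singleton_iff] at hvi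
    rw [← hv, hvi]
  set P : Finset (Set (Fin n)) := Finset.image (fun i : Fin 6 => f ⁻¹' {i}) Finset.univ with hP
  have hmemP : ∀ i : Fin 6, f ⁻¹' {i} ∈ P := by
    intro i
    exact Finset.mem_image.mpr ⟨i, Finset.mem_univ i, rfl⟩
  have val_add_one : ∀ v : Fin n, (v + 1).val = (v.val + 1) % n := by
    intro v; rw [Fin.add_def, val_one hn]
  have val_sub_one : ∀ v : Fin n, (v - 1).val = (n - 1 + v.val) % n := by
    intro v; rw [Fin.sub_def, val_one hn]
  have key_p : ∀ v : Fin n, (v + 1).val % 3 = (v.val + 1) % 3 := by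
    intro v
    have hv := v.isLt
    rw [val_add_one]
    by_cases h : v.val + 1 < n
    · rw [Nat.mod_eq_of_lt h]
    · have h2 : v.val + 1 = n := by omega
      rw [h2, Nat.mod_self]
      omega
  have key_m : ∀ v : Fin n, (v - 1).val % 3 = (v.val + 2) % 3 := by
    intro v
    have hv := v.isLt
    have hval := val_sub_one v
    by_cases h : v.val = 0
    · have e : n - 1 + v.val = n - 1 := by omega
      have e2 : (n - 1) % n = n - 1 := Nat.mod_eq_of_lt (by omega)
      rw [hval, e, e2]
      omega
    · have e : n - 1 + v.val = n + (v.val - 1) := by omega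
      have e2 : (n + (v.val - 1)) % n = (v.val - 1) % n := Nat.add_mod_left _ _
      have e3 : (v.val - 1) % n = v.val - 1 := Nat.mod_eq_of_lt (by omega)
      rw [hval, e, e2, e3]
      omega
  have hDfair : ∀ r : ℕ, r < 3 → IsFairDomSet (cycleGraph n) {v : Fin n | v.val % 3 = r} := by
    intro r hr
    apply fair_of_EO hn
    intro v hv
    simp only [Set.mem_setOf_eq] at hv
    have h1 := key_p v
    have h2 := key_m v
    have hv3 := v.isLt
    unfold EO
    simp only [Set.mem_setOf_eq]
    omega
  have hmemf : ∀ (i : Fin 6) (z : Fin n),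
      z ∈ f ⁻¹' {i} ↔ ((z.val < 3 ∧ z.val % 3 = i.val) ∨ (¬ z.val < 3 ∧ 3 + z.val % 3 = i.val)) := by
    intro i z
    simp only [Set.mem_preimage, Set.mem_singleton_iff, hf]
    split_ifs with h <;> simp only [Fin.ext_iff] <;> simp <;> omega
  have hunion2 : ∀ i j : Fin 6, i.val < 3 → j.val = 3 + i.val →
      IsFairDomSet (cycleGraph n) (f ⁻¹' {i} ∪ f ⁻¹' {j}) := by
    intro i j hi hj
    have he : f ⁻¹' {i} ∪ f ⁻¹' {j} = {v : Fin n | v.val % 3 = i.val} := by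
      ext v
      rw [Set.mem_union, hmemf i v, hmemf j v]
      simp only [Set.mem_setOf_eq]
      omega
    rw [he]
    exact hDfair i.val hi
  have hSsing : ∀ i : Fin 6, i.val < 3 → ∃ w : Fin n, f ⁻¹' {i} = {w} := by
    intro i hi
    refine ⟨⟨i.val, by omega⟩, ?_⟩
    ext z
    rw [hmemf i z]
    simp only [Set.mem_singleton_iff, Fin.ext_iff]
    have := z.isLt
    constructor
    · intro hc; omega
    · intro hc; omega
  have hSnotfair : ∀ i : Fin 6, i.val < 3 → ¬ IsFairDomSet (cycleGraph n) (f ⁻¹' {i}) := by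
    intro i hi
    obtain ⟨w, hw⟩ := hSsing i hi
    rw [hw]
    exact singleton_not_fair hn w
  have hTnotfair : ∀ i : Fin 6, 3 ≤ i.val → ¬ IsFairDomSet (cycleGraph n) (f ⁻¹' {i}) := by
    intro i hi3 hfair
    set r := i.val - 3 with hrdef
    have hival : i.val = 3 + r := by omega
    have hr : r < 3 := by
      have := i.isLt
      omega
    set w : Fin n := ⟨r, by omega⟩ with hwdef
    have hwv : w.val = r := rfl
    have hwn : w ∉ f ⁻¹' {i} := by
      rw [hmemf i w, hwv]
      omega
    have hp1 : (w + 1).val = r + 1 := by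
      rw [val_add_one, hwv]
      exact Nat.mod_eq_of_lt (by omega)
    have hm1 : (r = 0 ∧ (w - 1).val = n - 1) ∨ (1 ≤ r ∧ (w - 1).val = r - 1) := by
      have hval := val_sub_one w
      rw [hwv] at hval
      by_cases h : r = 0
      · left
        refine ⟨h, ?_⟩
        rw [hval, h, Nat.add_zero]
        exact Nat.mod_eq_of_lt (by omega)
      · right
        refine ⟨by omega, ?_⟩
        have e : n - 1 + r = n + (r - 1) := by omega
        rw [hval, e, Nat.add_mod_left]
        exact Nat.mod_eq_of_lt (by omega)
    rcases fair_dom' hn hfair hwn with h | h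
    · rw [hmemf i _] at h
      rcases hm1 with ⟨h0, he⟩ | ⟨h0, he⟩ <;> rw [he] at h <;> omega
    · rw [hmemf i _] at h
      rw [hp1] at h
      omega
  refine ⟨P, ⟨?_, ?_, ?_, ?_⟩, ?_⟩
  · intro A hA
    obtain ⟨i, -, rfl⟩ := Finset.mem_image.mp hA
    obtain ⟨v, hv⟩ := hsurj i
    exact ⟨v, by simp [hv]⟩
  · intro A hA B hB hAB
    obtain ⟨i, -, rfl⟩ := Finset.mem_image.mp (by exact_mod_cast hA)
    obtain ⟨j, -, rfl⟩ := Finset.mem_image.mp (by exact_mod_cast hB)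
    have hij : i ≠ j := fun h => hAB (by rw [h])
    simp only [Function.onFun, id_eq]
    rw [Set.disjoint_left]
    intro v hvi hvj
    simp only [Set.mem_preimage, Set.mem_singleton_iff] at hvi hvj
    exact hij (hvi ▸ hvj)
  · ext v
    simp only [Set.mem_sUnion, Set.mem_univ, iff_true]
    exact ⟨f ⁻¹' {f v}, by simpa using hmemP (f v), by simp⟩
  · intro A hA
    obtain ⟨i, -, rfl⟩ := Finset.mem_image.mp hA
    right
    by_cases hi : i.val < 3
    · set j : Fin 6 := ⟨3 + i.val, by omega⟩ with hj
      have hjv : j.val = 3 + i.val := rfl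
      refine ⟨hSnotfair i hi, f ⁻¹' {j}, hmemP j, ?_,
        hTnotfair j (by rw [hjv]; omega), hunion2 i j hi hjv⟩
      intro h
      have := congrArg Fin.val (hinj h)
      rw [hjv] at this
      omega
    · have hi3 : 3 ≤ i.val := by omega
      have hilt := i.isLt
      set j : Fin 6 := ⟨i.val - 3, by omega⟩ with hj
      have hjv : j.val = i.val - 3 := rfl
      refine ⟨hTnotfair i hi3, f ⁻¹' {j}, hmemP j, ?_,
        hSnotfair j (by rw [hjv]; omega), ?_⟩
      · intro h
        have := congrArg Fin.val (hinj h)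
        rw [hjv] at this
        omega
      · rw [Set.union_comm]
        exact hunion2 j i (by rw [hjv]; omega) (by rw [hjv]; omega)
  · rw [hP, Finset.card_image_of_injective _ hinj, Finset.card_univ, Fintype.card_fin]

lemma exnot {α : Type*} [DecidableEq α] {s t : Finset α} (h : t.card < s.card) :
    ∃ x ∈ s, x ∉ t := by
  by_contra hc
  push_neg at hc
  exact absurd (Finset.card_le_card hc) (by omega)

lemma ex3 {α : Type*} [DecidableEq α] {s : Finset α} (h : 3 ≤ s.card) :
    ∃ x ∈ s, ∃ y ∈ s, ∃ z ∈ s, x ≠ y ∧ x ≠ z ∧ y ≠ z := by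
  obtain ⟨x, hx⟩ := Finset.card_pos.mp (show 0 < s.card by omega)
  have hex : 2 ≤ (s.erase x).card := by
    have := Finset.card_erase_of_mem hx
    omega
  obtain ⟨y, hy⟩ := Finset.card_pos.mp (show 0 < (s.erase x).card by omega)
  have hey : 1 ≤ ((s.erase x).erase y).card := by
    have := Finset.card_erase_of_mem hy
    omega
  obtain ⟨z, hz⟩ := Finset.card_pos.mp (show 0 < ((s.erase x).erase y).card by omega)
  have hyx := Finset.mem_erase.mp hy
  have hz' := Finset.mem_erase.mp hz
  have hzx := Finset.mem_erase.mp hz'.2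
  exact ⟨x, hx, y, hyx.2, z, hzx.2, fun he => hyx.1 he.symm, fun he => hzx.1 he.symm,
    fun he => hz'.1 he.symm⟩

lemma upper (n k : ℕ) (hk : 2 ≤ k) (hn3 : n = 3*k) (P : Finset (Set (Fin n)))
    (hP : IsFairCoalitionPartition (cycleGraph n) P) : P.card ≤ 6 := by
  haveI : NeZero n := ⟨by omega⟩
  have hn : 6 ≤ n := by omega
  by_contra hlt
  push_neg at hlt
  have h7 : 7 ≤ P.card := hlt
  obtain ⟨hne, hdisjP, hcover, hcond⟩ := hP
  have hdisj : ∀ {A B : Set (Fin n)}, A ∈ P → B ∈ P → A ≠ B → Disjoint A B := by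
    intro A B hA hB hAB
    exact hdisjP hA hB hAB
  have hnf : ∀ A ∈ P, ¬ IsFairDomSet (cycleGraph n) A := by
    intro A hA
    rcases hcond A hA with ⟨⟨v, rfl⟩, hfair⟩ | ⟨h, -⟩
    · exact absurd hfair (singleton_not_fair hn v)
    · exact h
  have hpartner : ∀ A ∈ P, ∃ B ∈ P, B ≠ A ∧ IsFairDomSet (cycleGraph n) (A ∪ B) := by
    intro A hA
    rcases hcond A hA with ⟨⟨v, rfl⟩, hfair⟩ | ⟨-, B, hB, hBA, -, hf⟩
    · exact absurd hfair (singleton_not_fair hn v)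
    · exact ⟨B, hB, hBA, hf⟩
  -- Step 1 : two disjoint coalition edges
  by_cases h2e : ∃ a ∈ P, ∃ b ∈ P, ∃ c ∈ P, ∃ d ∈ P,
      a ≠ b ∧ c ≠ d ∧ a ≠ c ∧ a ≠ d ∧ b ≠ c ∧ b ≠ d ∧
      IsFairDomSet (cycleGraph n) (a ∪ b) ∧ IsFairDomSet (cycleGraph n) (c ∪ d)
  case neg =>
    obtain ⟨A0, hA0⟩ := Finset.card_pos.mp (show 0 < P.card by omega)
    obtain ⟨B0, hB0, hB0A0, hfab0⟩ := hpartner A0 hA0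
    set P'' : Finset (Set (Fin n)) := P \ {A0, B0} with hP''
    have hcard2 : ({A0, B0} : Finset (Set (Fin n))).card ≤ 2 :=
      le_trans (Finset.card_insert_le _ _) (by simp)
    have h5 : 5 ≤ P''.card := by
      rw [hP'']
      have := Finset.le_card_sdiff ({A0, B0} : Finset (Set (Fin n))) P
      omega
    have hP''spec : ∀ {X}, X ∈ P'' → X ∈ P ∧ X ≠ A0 ∧ X ≠ B0 := by
      intro X hX
      have h := Finset.mem_sdiff.mp hX
      refine ⟨h.1, ?_, ?_⟩ <;> intro hc <;> apply h.2 <;> simp [hc]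
    have hPP : ∀ X ∈ P'', IsFairDomSet (cycleGraph n) (X ∪ A0) ∨
        IsFairDomSet (cycleGraph n) (X ∪ B0) := by
      intro X hX
      obtain ⟨hXP, hXA0, hXB0⟩ := hP''spec hX
      obtain ⟨BX, hBX, hBXX, hfX⟩ := hpartner X hXP
      by_cases hBA : BX = A0
      · left; rw [← hBA]; exact hfX
      by_cases hBB : BX = B0
      · right; rw [← hBB]; exact hfX
      exact absurd ⟨X, hXP, BX, hBX, A0, hA0, B0, hB0, Ne.symm hBXX, Ne.symm hB0A0,
        hXA0, hXB0, hBA, hBB, hfX, hfab0⟩ h2e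
    set SA : Finset (Set (Fin n)) :=
      P''.filter (fun X => IsFairDomSet (cycleGraph n) (X ∪ A0)) with hSA
    set SB : Finset (Set (Fin n)) :=
      P''.filter (fun X => IsFairDomSet (cycleGraph n) (X ∪ B0)) with hSB
    have hsub : P'' ⊆ SA ∪ SB := by
      intro X hX
      rcases hPP X hX with h | h
      · exact Finset.mem_union_left _ (Finset.mem_filter.mpr ⟨hX, h⟩)
      · exact Finset.mem_union_right _ (Finset.mem_filter.mpr ⟨hX, h⟩)
    have hcards : 5 ≤ SA.card + SB.card :=
      le_trans (le_trans h5 (Finset.card_le_card hsub)) (Finset.card_union_le _ _)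
    have h3 : 3 ≤ SA.card ∨ 3 ≤ SB.card := by omega
    rcases h3 with h3 | h3
    · obtain ⟨X, hX, Y, hY, Z, hZ, hXY, hXZ, hYZ⟩ := ex3 h3
      have hXs := Finset.mem_filter.mp hX
      have hYs := Finset.mem_filter.mp hY
      have hZs := Finset.mem_filter.mp hZ
      have hXp := hP''spec hXs.1
      have hYp := hP''spec hYs.1
      have hZp := hP''spec hZs.1
      refine D3' hn (hnf A0 hA0) (hdisj hB0 hXp.1 (Ne.symm hXp.2.2))
        (hdisj hB0 hYp.1 (Ne.symm hYp.2.2)) (hdisj hB0 hZp.1 (Ne.symm hZp.2.2))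
        (hdisj hXp.1 hYp.1 hXY) (hdisj hXp.1 hZp.1 hXZ) (hdisj hYp.1 hZp.1 hYZ)
        hfab0 ?_ ?_ ?_
      · rw [Set.union_comm]; exact hXs.2
      · rw [Set.union_comm]; exact hYs.2
      · rw [Set.union_comm]; exact hZs.2
    · obtain ⟨X, hX, Y, hY, Z, hZ, hXY, hXZ, hYZ⟩ := ex3 h3
      have hXs := Finset.mem_filter.mp hX
      have hYs := Finset.mem_filter.mp hY
      have hZs := Finset.mem_filter.mp hZ
      have hXp := hP''spec hXs.1
      have hYp := hP''spec hYs.1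
      have hZp := hP''spec hZs.1
      refine D3' hn (hnf B0 hB0) (hdisj hA0 hXp.1 (Ne.symm hXp.2.1))
        (hdisj hA0 hYp.1 (Ne.symm hYp.2.1)) (hdisj hA0 hZp.1 (Ne.symm hZp.2.1))
        (hdisj hXp.1 hYp.1 hXY) (hdisj hXp.1 hZp.1 hXZ) (hdisj hYp.1 hZp.1 hYZ)
        ?_ ?_ ?_ ?_
      · rw [Set.union_comm]; exact hfab0
      · rw [Set.union_comm]; exact hXs.2
      · rw [Set.union_comm]; exact hYs.2
      · rw [Set.union_comm]; exact hZs.2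
  case pos =>
  obtain ⟨a, ha, b, hb, c, hc, d, hd, hab, hcd, hac, had, hbc, hbd, hfab, hfcd⟩ := h2e
  set P' : Finset (Set (Fin n)) := P \ {a, b, c, d} with hP'
  have hcard4 : ({a, b, c, d} : Finset (Set (Fin n))).card ≤ 4 := by
    refine le_trans (Finset.card_insert_le _ _) ?_
    have h3' : ({b, c, d} : Finset (Set (Fin n))).card ≤ 3 := by
      refine le_trans (Finset.card_insert_le _ _) ?_
      have h2' : ({c, d} : Finset (Set (Fin n))).card ≤ 2 :=
        le_trans (Finset.card_insert_le _ _) (by simp)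
      omega
    omega
  have hP'3 : 3 ≤ P'.card := by
    rw [hP']
    have := Finset.le_card_sdiff ({a, b, c, d} : Finset (Set (Fin n))) P
    omega
  have hP'spec : ∀ {X}, X ∈ P' → X ∈ P ∧ X ≠ a ∧ X ≠ b ∧ X ≠ c ∧ X ≠ d := by
    intro X hX
    have h := Finset.mem_sdiff.mp hX
    refine ⟨h.1, ?_, ?_, ?_, ?_⟩ <;> intro hc' <;> apply h.2 <;> simp [hc']
  have hMN : Disjoint (a ∪ b) (c ∪ d) := by
    rw [Set.disjoint_union_left]
    exact ⟨Set.disjoint_union_right.mpr ⟨hdisj ha hc hac, hdisj ha hd had⟩,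
      Set.disjoint_union_right.mpr ⟨hdisj hb hc hbc, hdisj hb hd hbd⟩⟩
  have hXM : ∀ {X}, X ∈ P' → Disjoint X (a ∪ b) := by
    intro X hX
    obtain ⟨hXP, h1, h2, h3, h4⟩ := hP'spec hX
    exact Set.disjoint_union_right.mpr ⟨hdisj hXP ha h1, hdisj hXP hb h2⟩
  have hXN : ∀ {X}, X ∈ P' → Disjoint X (c ∪ d) := by
    intro X hX
    obtain ⟨hXP, h1, h2, h3, h4⟩ := hP'spec hX
    exact Set.disjoint_union_right.mpr ⟨hdisj hXP hc h3, hdisj hXP hd h4⟩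
  -- no other coalition partners for parts in P'
  have hOnly : ∀ X ∈ P', ∀ B ∈ P, B ≠ X → IsFairDomSet (cycleGraph n) (X ∪ B) →
      (B = a ∨ B = b ∨ B = c ∨ B = d) := by
    intro X hX B hB hBX hfXB
    by_contra hcon
    push_neg at hcon
    obtain ⟨hBa, hBb, hBc, hBd⟩ := hcon
    obtain ⟨hXP, hXa, hXb, hXc, hXd⟩ := hP'spec hX
    have h6 : ({X, B, a, b, c, d} : Finset (Set (Fin n))).card ≤ 6 := by
      refine le_trans (Finset.card_insert_le _ _) ?_
      refine le_trans (Nat.add_le_add_right (Finset.card_insert_le _ _) 1) ?_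
      omega
    obtain ⟨E, hE, hEnot⟩ := exnot (show ({X, B, a, b, c, d} : Finset (Set (Fin n))).card < P.card by omega)
    simp only [Finset.mem_insert, Finset.mem_singleton, not_or] at hEnot
    obtain ⟨hEX, hEB, hEa, hEb, hEc, hEd⟩ := hEnot
    refine no3 hn (show n ≤ 3 * k by omega) (SZ hn (by omega) hfXB) (SZ hn (by omega) hfab)
      (SZ hn (by omega) hfcd) (hne E hE) ?_ ?_ ?_ ?_ ?_ ?_
    · rw [Set.disjoint_union_left]
      exact ⟨hXM hX, Set.disjoint_union_right.mpr ⟨hdisj hB ha hBa, hdisj hB hb hBb⟩⟩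
    · rw [Set.disjoint_union_left]
      exact ⟨hXN hX, Set.disjoint_union_right.mpr ⟨hdisj hB hc hBc, hdisj hB hd hBd⟩⟩
    · rw [Set.disjoint_union_left]
      exact ⟨hdisj hXP hE (Ne.symm hEX), hdisj hB hE (Ne.symm hEB)⟩
    · exact hMN
    · rw [Set.disjoint_union_left]
      exact ⟨hdisj ha hE (Ne.symm hEa), hdisj hb hE (Ne.symm hEb)⟩
    · rw [Set.disjoint_union_left]
      exact ⟨hdisj hc hE (Ne.symm hEc), hdisj hd hE (Ne.symm hEd)⟩
  -- uniqueness of partners on each side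
  have huniq : ∀ X ∈ P', ∀ X' ∈ P', ∀ t t' : Set (Fin n), (t = a ∨ t = b) → (t' = a ∨ t' = b) →
      IsFairDomSet (cycleGraph n) (X ∪ t) → IsFairDomSet (cycleGraph n) (X' ∪ t') →
      ∀ X'' ∈ P', X'' ≠ X → X'' ≠ X' → t = t' := by
    intro X hX X' hX' t t' ht ht' hfXt hfX't X'' hX'' hne1 hne2
    obtain ⟨hX''P, -⟩ := hP'spec hX''
    obtain ⟨hXP, -⟩ := hP'spec hX
    obtain ⟨hX'P, -⟩ := hP'spec hX'
    obtain ⟨v, hv⟩ := hne X'' hX''P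
    have hvM : v ∉ a ∪ b := Set.disjoint_left.mp (hXM hX'') hv
    have hvN : v ∉ c ∪ d := Set.disjoint_left.mp (hXN hX'') hv
    have hvX : v ∉ X := Set.disjoint_left.mp (hdisj hX''P hXP hne1) hv
    have hvX' : v ∉ X' := Set.disjoint_left.mp (hdisj hX''P hX'P hne2) hv
    obtain ⟨ε, hε, hMε, hNε⟩ := W2L hn hfab hfcd hMN hvM hvN
    have hδnbr : v - ε = v - 1 ∨ v - ε = v + 1 := by
      rcases hε with rfl | rfl
      · exact Or.inl rfl
      · exact Or.inr (by rw [sub_neg_eq_add])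
    have htM : t ⊆ a ∪ b := by
      rcases ht with rfl | rfl
      · exact Set.subset_union_left
      · exact Set.subset_union_right
    have ht'M : t' ⊆ a ∪ b := by
      rcases ht' with rfl | rfl
      · exact Set.subset_union_left
      · exact Set.subset_union_right
    have h1 : v - ε ∈ t := E1gen hn hMN hfab hfcd htM (hXM hX) (hXN hX) hfXt hvM hvN hvX hδnbr hMε
    have h2 : v - ε ∈ t' := E1gen hn hMN hfab hfcd ht'M (hXM hX') (hXN hX') hfX't hvM hvN hvX' hδnbr hMε
    by_contra hne'
    have htP : t ∈ P := by rcases ht with rfl | rfl; exacts [ha, hb]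
    have ht'P : t' ∈ P := by rcases ht' with rfl | rfl; exacts [ha, hb]
    exact Set.disjoint_left.mp (hdisj htP ht'P hne') h1 h2
  have huniqc : ∀ X ∈ P', ∀ X' ∈ P', ∀ t t' : Set (Fin n), (t = c ∨ t = d) → (t' = c ∨ t' = d) →
      IsFairDomSet (cycleGraph n) (X ∪ t) → IsFairDomSet (cycleGraph n) (X' ∪ t') →
      ∀ X'' ∈ P', X'' ≠ X → X'' ≠ X' → t = t' := by
    intro X hX X' hX' t t' ht ht' hfXt hfX't X'' hX'' hne1 hne2
    obtain ⟨hX''P, -⟩ := hP'spec hX''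
    obtain ⟨hXP, -⟩ := hP'spec hX
    obtain ⟨hX'P, -⟩ := hP'spec hX'
    obtain ⟨v, hv⟩ := hne X'' hX''P
    have hvM : v ∉ a ∪ b := Set.disjoint_left.mp (hXM hX'') hv
    have hvN : v ∉ c ∪ d := Set.disjoint_left.mp (hXN hX'') hv
    have hvX : v ∉ X := Set.disjoint_left.mp (hdisj hX''P hXP hne1) hv
    have hvX' : v ∉ X' := Set.disjoint_left.mp (hdisj hX''P hX'P hne2) hv
    obtain ⟨ε, hε, hMε, hNε⟩ := W2L hn hfcd hfab hMN.symm hvN hvM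
    have hδnbr : v - ε = v - 1 ∨ v - ε = v + 1 := by
      rcases hε with rfl | rfl
      · exact Or.inl rfl
      · exact Or.inr (by rw [sub_neg_eq_add])
    have htM : t ⊆ c ∪ d := by
      rcases ht with rfl | rfl
      · exact Set.subset_union_left
      · exact Set.subset_union_right
    have ht'M : t' ⊆ c ∪ d := by
      rcases ht' with rfl | rfl
      · exact Set.subset_union_left
      · exact Set.subset_union_right
    have h1 : v - ε ∈ t := E1gen hn hMN.symm hfcd hfab htM (hXN hX) (hXM hX) hfXt hvN hvM hvX hδnbr hMε
    have h2 : v - ε ∈ t' := E1gen hn hMN.symm hfcd hfab ht'M (hXN hX') (hXM hX') hfX't hvN hvM hvX' hδnbr hMε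
    by_contra hne'
    have htP : t ∈ P := by rcases ht with rfl | rfl; exacts [hc, hd]
    have ht'P : t' ∈ P := by rcases ht' with rfl | rfl; exacts [hc, hd]
    exact Set.disjoint_left.mp (hdisj htP ht'P hne') h1 h2
  -- the two filters
  set Sab : Finset (Set (Fin n)) := P'.filter (fun X =>
      IsFairDomSet (cycleGraph n) (X ∪ a) ∨ IsFairDomSet (cycleGraph n) (X ∪ b)) with hSab'
  set Scd : Finset (Set (Fin n)) := P'.filter (fun X =>
      IsFairDomSet (cycleGraph n) (X ∪ c) ∨ IsFairDomSet (cycleGraph n) (X ∪ d)) with hScd'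
  have hgetab : ∀ X ∈ Sab, ∃ t, (t = a ∨ t = b) ∧ IsFairDomSet (cycleGraph n) (X ∪ t) := by
    intro X hX
    rcases (Finset.mem_filter.mp hX).2 with h | h
    · exact ⟨a, Or.inl rfl, h⟩
    · exact ⟨b, Or.inr rfl, h⟩
  have hgetcd : ∀ X ∈ Scd, ∃ t, (t = c ∨ t = d) ∧ IsFairDomSet (cycleGraph n) (X ∪ t) := by
    intro X hX
    rcases (Finset.mem_filter.mp hX).2 with h | h
    · exact ⟨c, Or.inl rfl, h⟩
    · exact ⟨d, Or.inr rfl, h⟩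
  have hcov : ∀ X ∈ P', X ∈ Sab ∨ X ∈ Scd := by
    intro X hX
    obtain ⟨hXP, -⟩ := hP'spec hX
    obtain ⟨B, hB, hBX, hfXB⟩ := hpartner X hXP
    rcases hOnly X hX B hB hBX hfXB with rfl | rfl | rfl | rfl
    · exact Or.inl (Finset.mem_filter.mpr ⟨hX, Or.inl hfXB⟩)
    · exact Or.inl (Finset.mem_filter.mpr ⟨hX, Or.inr hfXB⟩)
    · exact Or.inr (Finset.mem_filter.mpr ⟨hX, Or.inl hfXB⟩)
    · exact Or.inr (Finset.mem_filter.mpr ⟨hX, Or.inr hfXB⟩)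
  have hSabne : Sab.Nonempty := by
    rw [Finset.nonempty_iff_ne_empty]
    intro hemp
    have hallcd : ∀ X ∈ P', X ∈ Scd := by
      intro X hX
      rcases hcov X hX with h | h
      · rw [hemp] at h; exact absurd h (Finset.notMem_empty X)
      · exact h
    obtain ⟨X, hX, Y, hY, Z, hZ, hXY, hXZ, hYZ⟩ := ex3 hP'3
    obtain ⟨tX, htX, hfX⟩ := hgetcd X (hallcd X hX)
    obtain ⟨tY, htY, hfY⟩ := hgetcd Y (hallcd Y hY)
    obtain ⟨tZ, htZ, hfZ⟩ := hgetcd Z (hallcd Z hZ)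
    have hXYt : tX = tY := huniqc X hX Y hY tX tY htX htY hfX hfY Z hZ (Ne.symm hXZ) (Ne.symm hYZ)
    have hXZt : tX = tZ := huniqc X hX Z hZ tX tZ htX htZ hfX hfZ Y hY (Ne.symm hXY) hYZ
    rw [← hXYt] at hfY
    rw [← hXZt] at hfZ
    obtain ⟨hXP, hXa, hXb, hXc, hXd⟩ := hP'spec hX
    obtain ⟨hYP, hYa, hYb, hYc, hYd⟩ := hP'spec hY
    obtain ⟨hZP, hZa, hZb, hZc, hZd⟩ := hP'spec hZ
    rcases htX with rfl | rfl
    · refine D3' hn (hnf tX hc) (hdisj hd hXP (Ne.symm hXd)) (hdisj hd hYP (Ne.symm hYd))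
        (hdisj hd hZP (Ne.symm hZd)) (hdisj hXP hYP hXY) (hdisj hXP hZP hXZ)
        (hdisj hYP hZP hYZ) hfcd ?_ ?_ ?_
      · rw [Set.union_comm]; exact hfX
      · rw [Set.union_comm]; exact hfY
      · rw [Set.union_comm]; exact hfZ
    · refine D3' hn (hnf tX hd) (hdisj hc hXP (Ne.symm hXc)) (hdisj hc hYP (Ne.symm hYc))
        (hdisj hc hZP (Ne.symm hZc)) (hdisj hXP hYP hXY) (hdisj hXP hZP hXZ)
        (hdisj hYP hZP hYZ) ?_ ?_ ?_ ?_
      · rw [Set.union_comm]; exact hfcd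
      · rw [Set.union_comm]; exact hfX
      · rw [Set.union_comm]; exact hfY
      · rw [Set.union_comm]; exact hfZ
  have hScdne : Scd.Nonempty := by
    rw [Finset.nonempty_iff_ne_empty]
    intro hemp
    have hallab : ∀ X ∈ P', X ∈ Sab := by
      intro X hX
      rcases hcov X hX with h | h
      · exact h
      · rw [hemp] at h; exact absurd h (Finset.notMem_empty X)
    obtain ⟨X, hX, Y, hY, Z, hZ, hXY, hXZ, hYZ⟩ := ex3 hP'3
    obtain ⟨tX, htX, hfX⟩ := hgetab X (hallab X hX)
    obtain ⟨tY, htY, hfY⟩ := hgetab Y (hallab Y hY)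
    obtain ⟨tZ, htZ, hfZ⟩ := hgetab Z (hallab Z hZ)
    have hXYt : tX = tY := huniq X hX Y hY tX tY htX htY hfX hfY Z hZ (Ne.symm hXZ) (Ne.symm hYZ)
    have hXZt : tX = tZ := huniq X hX Z hZ tX tZ htX htZ hfX hfZ Y hY (Ne.symm hXY) hYZ
    rw [← hXYt] at hfY
    rw [← hXZt] at hfZ
    obtain ⟨hXP, hXa, hXb, hXc, hXd⟩ := hP'spec hX
    obtain ⟨hYP, hYa, hYb, hYc, hYd⟩ := hP'spec hY
    obtain ⟨hZP, hZa, hZb, hZc, hZd⟩ := hP'spec hZ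
    rcases htX with rfl | rfl
    · refine D3' hn (hnf tX ha) (hdisj hb hXP (Ne.symm hXb)) (hdisj hb hYP (Ne.symm hYb))
        (hdisj hb hZP (Ne.symm hZb)) (hdisj hXP hYP hXY) (hdisj hXP hZP hXZ)
        (hdisj hYP hZP hYZ) hfab ?_ ?_ ?_
      · rw [Set.union_comm]; exact hfX
      · rw [Set.union_comm]; exact hfY
      · rw [Set.union_comm]; exact hfZ
    · refine D3' hn (hnf tX hb) (hdisj ha hXP (Ne.symm hXa)) (hdisj ha hYP (Ne.symm hYa))
        (hdisj ha hZP (Ne.symm hZa)) (hdisj hXP hYP hXY) (hdisj hXP hZP hXZ)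
        (hdisj hYP hZP hYZ) ?_ ?_ ?_ ?_
      · rw [Set.union_comm]; exact hfab
      · rw [Set.union_comm]; exact hfX
      · rw [Set.union_comm]; exact hfY
      · rw [Set.union_comm]; exact hfZ
  -- distinct X1 ∈ Sab, X3 ∈ Scd
  obtain ⟨X1, hX1S, X3, hX3S, h13⟩ : ∃ X1 ∈ Sab, ∃ X3 ∈ Scd, X1 ≠ X3 := by
    obtain ⟨X1', hX1'⟩ := hSabne
    obtain ⟨X3', hX3'⟩ := hScdne
    by_cases hxx : X1' = X3'
    · obtain ⟨Y, hY, hYne⟩ := exnot (show ({X1'} : Finset (Set (Fin n))).card < P'.card by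
        simp; omega)
      simp only [Finset.mem_singleton] at hYne
      rcases hcov Y hY with hYab | hYcd
      · exact ⟨Y, hYab, X3', hX3', by rw [← hxx]; exact hYne⟩
      · exact ⟨X1', hX1', Y, hYcd, fun h => hYne (by rw [← h, hxx])⟩
    · exact ⟨X1', hX1', X3', hX3', hxx⟩
  have hX1P' : X1 ∈ P' := Finset.filter_subset _ _ hX1S
  have hX3P' : X3 ∈ P' := Finset.filter_subset _ _ hX3S
  -- X2
  obtain ⟨X2, hX2P', hX2not⟩ := exnot (show ({X1, X3} : Finset (Set (Fin n))).card < P'.card by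
    have : ({X1, X3} : Finset (Set (Fin n))).card ≤ 2 :=
      le_trans (Finset.card_insert_le _ _) (by simp)
    omega)
  simp only [Finset.mem_insert, Finset.mem_singleton, not_or] at hX2not
  obtain ⟨hX21, hX23⟩ := hX2not
  -- normalized partners
  obtain ⟨a0, ha0, hfX1a⟩ := hgetab X1 hX1S
  obtain ⟨c0, hc0, hfX3c⟩ := hgetcd X3 hX3S
  obtain ⟨b0, hb0, hab0, hfab0⟩ : ∃ s, (s = a ∨ s = b) ∧ a0 ≠ s ∧
      IsFairDomSet (cycleGraph n) (a0 ∪ s) := by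
    rcases ha0 with rfl | rfl
    · exact ⟨b, Or.inr rfl, hab, hfab⟩
    · exact ⟨a, Or.inl rfl, Ne.symm hab, by rw [Set.union_comm]; exact hfab⟩
  obtain ⟨d0, hd0, hcd0, hfcd0⟩ : ∃ s, (s = c ∨ s = d) ∧ c0 ≠ s ∧
      IsFairDomSet (cycleGraph n) (c0 ∪ s) := by
    rcases hc0 with rfl | rfl
    · exact ⟨d, Or.inr rfl, hcd, hfcd⟩
    · exact ⟨c, Or.inl rfl, Ne.symm hcd, by rw [Set.union_comm]; exact hfcd⟩
  have hX2fair : IsFairDomSet (cycleGraph n) (X2 ∪ a0) ∨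
      IsFairDomSet (cycleGraph n) (X2 ∪ c0) := by
    rcases hcov X2 hX2P' with h | h
    · left
      obtain ⟨t, ht, hft⟩ := hgetab X2 h
      have := huniq X2 hX2P' X1 hX1P' t a0 ht ha0 hft hfX1a X3 hX3P' (Ne.symm hX23) (Ne.symm h13)
      rwa [this] at hft
    · right
      obtain ⟨t, ht, hft⟩ := hgetcd X2 h
      have := huniqc X2 hX2P' X3 hX3P' t c0 ht hc0 hft hfX3c X1 hX1P' (Ne.symm hX21) h13
      rwa [this] at hft
  -- memberships and distinctness for FINAL
  have ha0P : a0 ∈ P := by rcases ha0 with rfl | rfl; exacts [ha, hb]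
  have hb0P : b0 ∈ P := by rcases hb0 with rfl | rfl; exacts [ha, hb]
  have hc0P : c0 ∈ P := by rcases hc0 with rfl | rfl; exacts [hc, hd]
  have hd0P : d0 ∈ P := by rcases hd0 with rfl | rfl; exacts [hc, hd]
  have habcd : ∀ s t : Set (Fin n), (s = a ∨ s = b) → (t = c ∨ t = d) → s ≠ t := by
    rintro s t (rfl | rfl) (rfl | rfl)
    exacts [hac, had, hbc, hbd]
  have hXab : ∀ {X}, X ∈ P' → ∀ s : Set (Fin n), (s = a ∨ s = b) → X ≠ s := by
    intro X hX s hs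
    obtain ⟨-, h1, h2, -, -⟩ := hP'spec hX
    rcases hs with rfl | rfl
    exacts [h1, h2]
  have hXcd : ∀ {X}, X ∈ P' → ∀ s : Set (Fin n), (s = c ∨ s = d) → X ≠ s := by
    intro X hX s hs
    obtain ⟨-, -, -, h3, h4⟩ := hP'spec hX
    rcases hs with rfl | rfl
    exacts [h3, h4]
  have hX1P : X1 ∈ P := (hP'spec hX1P').1
  have hX2P : X2 ∈ P := (hP'spec hX2P').1
  have hX3P : X3 ∈ P := (hP'spec hX3P').1
  -- all disjointnesses
  have Dab := hdisj ha0P hb0P hab0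
  have Dac := hdisj ha0P hc0P (habcd a0 c0 ha0 hc0)
  have Dad := hdisj ha0P hd0P (habcd a0 d0 ha0 hd0)
  have Dbc := hdisj hb0P hc0P (habcd b0 c0 hb0 hc0)
  have Dbd := hdisj hb0P hd0P (habcd b0 d0 hb0 hd0)
  have Dcd := hdisj hc0P hd0P hcd0
  have D1a := hdisj hX1P ha0P (hXab hX1P' a0 ha0)
  have D1b := hdisj hX1P hb0P (hXab hX1P' b0 hb0)
  have D1c := hdisj hX1P hc0P (hXcd hX1P' c0 hc0)
  have D1d := hdisj hX1P hd0P (hXcd hX1P' d0 hd0)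
  have D2a := hdisj hX2P ha0P (hXab hX2P' a0 ha0)
  have D2b := hdisj hX2P hb0P (hXab hX2P' b0 hb0)
  have D2c := hdisj hX2P hc0P (hXcd hX2P' c0 hc0)
  have D2d := hdisj hX2P hd0P (hXcd hX2P' d0 hd0)
  have D3a := hdisj hX3P ha0P (hXab hX3P' a0 ha0)
  have D3b := hdisj hX3P hb0P (hXab hX3P' b0 hb0)
  have D3c := hdisj hX3P hc0P (hXcd hX3P' c0 hc0)
  have D3d := hdisj hX3P hd0P (hXcd hX3P' d0 hd0)
  have D12 := hdisj hX1P hX2P (Ne.symm hX21)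
  have D13 := hdisj hX1P hX3P h13
  have D23 := hdisj hX2P hX3P hX23
  rcases hX2fair with h2f | h2f
  · exact FINAL hn Dab Dac Dad Dbc Dbd Dcd D1a D1b D1c D1d D2a D2b D2c D2d D3a D3b D3c D3d
      D12 D13 D23 (hne b0 hb0P) (hne X1 hX1P) (hne X2 hX2P) hfab0 hfcd0 hfX1a h2f hfX3c
  · exact FINAL hn Dcd Dac.symm Dbc.symm Dad.symm Dbd.symm Dab D3c D3d D3a D3b D2c D2d D2a D2b
      D1c D1d D1a D1b D23.symm D13.symm D12.symm (hne d0 hd0P) (hne X3 hX3P) (hne X2 hX2P)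
      hfcd0 hfab0 hfX3c h2f hfX1a

end FCAux

theorem stmt_2 (k : ℕ) (hk : 2 ≤ k) :
    fairCoalitionNumber (SimpleGraph.cycleGraph (3 * k)) = 6 := by
  unfold fairCoalitionNumber
  set S := {m | ∃ P : Finset (Set (Fin (3*k))),
    IsFairCoalitionPartition (cycleGraph (3*k)) P ∧ P.card = m} with hS
  have h6 : 6 ∈ S := by
    obtain ⟨P, hP, hcard⟩ := FCAux.lower k hk
    exact ⟨P, hP, hcard⟩
  have hub : ∀ m ∈ S, m ≤ 6 := by
    rintro m ⟨P, hP, rfl⟩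
    exact FCAux.upper (3*k) k hk rfl P hP
  exact le_antisymm (csSup_le ⟨6, h6⟩ hub) (le_csSup ⟨6, hub⟩ h6)
end

section
/- Let G be a simple graph of order n with fair domination number γ_f(G). Then the fair coalition number of G satisfies C_f(G) ≤ n − γ_f(G) + 2. -/
open SimpleGraph

/-- The fair domination number of `G`: the minimum cardinality of a fair dominating set. -/
noncomputable def fairDominationNumber {V : Type*} (G : SimpleGraph V) : ℕ :=
  sInf {n | ∃ D : Set V, IsFairDomSet G D ∧ D.ncard = n}

lemma sum_ncard_of_partition {V : Type*} [Fintype V] (P : Finset (Set V))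
    (hdisj : (P : Set (Set V)).PairwiseDisjoint id)
    (hcov : ⋃₀ (P : Set (Set V)) = Set.univ) :
    ∑ A ∈ P, A.ncard = Fintype.card V := by
  classical
  have hbu : (P.biUnion fun A => A.toFinset) = Finset.univ := by
    ext x
    simp only [Finset.mem_biUnion, Set.mem_toFinset, Finset.mem_univ, iff_true]
    have : x ∈ ⋃₀ (P : Set (Set V)) := by rw [hcov]; trivial
    simpa using this
  have hcard := Finset.card_biUnion (s := P) (t := fun A => A.toFinset)
    (fun A hA B hB hAB => by
      have := hdisj hA hB hAB
      simpa [Set.disjoint_toFinset, Function.onFun] using this)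
  rw [hbu, Finset.card_univ] at hcard
  rw [hcard]
  exact Finset.sum_congr rfl fun A _ => Set.ncard_eq_toFinset_card' A

theorem stmt_5 {V : Type*} [Fintype V] (G : SimpleGraph V) :
    fairCoalitionNumber G ≤ Fintype.card V - fairDominationNumber G + 2 := by
  classical
  apply csSup_le'
  rintro m ⟨P, ⟨hne, hdisj, hcov, hpart⟩, rfl⟩
  rcases P.eq_empty_or_nonempty with rfl | ⟨A, hA⟩
  · simp
  have hsum := sum_ncard_of_partition P hdisj hcov
  have hone : ∀ C ∈ P, 1 ≤ C.ncard := fun C hC =>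
    (Set.ncard_pos C.toFinite).mpr (hne C hC)
  have hPn : P.card ≤ Fintype.card V := by
    calc P.card = ∑ _C ∈ P, 1 := by simp
    _ ≤ ∑ C ∈ P, C.ncard := Finset.sum_le_sum hone
    _ = Fintype.card V := hsum
  rcases hpart A hA with ⟨⟨v, rfl⟩, hfds⟩ | ⟨_, B, hB, hBA, _, hfds⟩
  · have hγ : fairDominationNumber G ≤ 1 :=
      Nat.sInf_le ⟨{v}, hfds, Set.ncard_singleton v⟩
    have hn1 : 1 ≤ Fintype.card V := Fintype.card_pos_iff.mpr ⟨v⟩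
    omega
  · have hγ : fairDominationNumber G ≤ (A ∪ B).ncard :=
      Nat.sInf_le ⟨A ∪ B, hfds, rfl⟩
    have hub : (A ∪ B).ncard ≤ A.ncard + B.ncard := Set.ncard_union_le A B
    have hB' : B ∈ P.erase A := Finset.mem_erase.mpr ⟨hBA, hB⟩
    have hsplit : ∑ C ∈ P, C.ncard
        = A.ncard + (B.ncard + ∑ C ∈ (P.erase A).erase B, C.ncard) := by
      rw [← Finset.add_sum_erase _ _ hA, ← Finset.add_sum_erase _ _ hB']
    have hrest : ((P.erase A).erase B).card ≤ ∑ C ∈ (P.erase A).erase B, C.ncard := by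
      calc ((P.erase A).erase B).card = ∑ _C ∈ (P.erase A).erase B, 1 := by simp
      _ ≤ _ := Finset.sum_le_sum fun C hC =>
          hone C (Finset.mem_of_mem_erase (Finset.mem_of_mem_erase hC))
    have hcard2 : ((P.erase A).erase B).card = P.card - 2 := by
      rw [Finset.card_erase_of_mem hB', Finset.card_erase_of_mem hA]
      omega
    have h2 : 2 ≤ P.card := by
      have := Finset.card_erase_of_mem hA
      have h1 : 1 ≤ (P.erase A).card := Finset.card_pos.mpr ⟨B, hB'⟩
      omega
    omega
end

section
/- If T is a tree of order n ≥ 4 of the form T = T₁ ∘ K₁ (the corona of a tree T₁ with K₁), then the fair domination number of T equals n/2. -/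
open SimpleGraph

/-- The corona `G ∘ K₁`: attach one new pendant vertex to each vertex of `G`.
Vertex `(u, false)` is a copy of `u ∈ V(G)`; `(u, true)` is its pendant leaf. -/
def corona {V : Type*} (G : SimpleGraph V) : SimpleGraph (V × Bool) :=
  SimpleGraph.fromRel (fun a b =>
    (a.2 = false ∧ b.2 = false ∧ G.Adj a.1 b.1) ∨ (a.1 = b.1 ∧ a.2 = false ∧ b.2 = true))

lemma corona_adj_leaf {V : Type*} (G : SimpleGraph V) (u : V) (b : V × Bool) :
    (corona G).Adj (u, true) b ↔ b = (u, false) := by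
  obtain ⟨b1, b2⟩ := b
  cases b2 <;> simp only [corona, fromRel_adj, Prod.mk.injEq, ne_eq] <;> aesop

theorem stmt_9 {V : Type*} [Fintype V] (T₁ : SimpleGraph V) (hT₁ : T₁.IsTree)
    (hn : 4 ≤ Fintype.card (V × Bool)) :
    fairDominationNumber (corona T₁) = Fintype.card (V × Bool) / 2 := by
  classical
  have hcard : Fintype.card (V × Bool) / 2 = Fintype.card V := by
    simp [Fintype.card_prod, Fintype.card_bool]
  rw [hcard]
  set D : Set (V × Bool) := {p | p.2 = false} with hD
  have hDfair : IsFairDomSet (corona T₁) D := by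
    constructor
    · intro v hv
      have hv2 : v.2 = true := by simpa [hD] using hv
      have hv' : v = (v.1, true) := Prod.ext rfl hv2
      exact ⟨(v.1, false), rfl, by rw [hv']; exact (corona_adj_leaf T₁ v.1 _).mpr rfl⟩
    · refine ⟨1, le_refl _, fun v hv => ?_⟩
      have hv2 : v.2 = true := by simpa [hD] using hv
      have hv' : v = (v.1, true) := Prod.ext rfl hv2
      have : (corona T₁).neighborSet v ∩ D = {(v.1, false)} := by
        ext b
        simp only [Set.mem_inter_iff, mem_neighborSet, Set.mem_singleton_iff]
        rw [hv', corona_adj_leaf]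
        constructor
        · tauto
        · rintro rfl; exact ⟨rfl, rfl⟩
      rw [this, Set.ncard_singleton]
  have hDcard : D.ncard = Fintype.card V := by
    have : D = (fun u : V => (u, false)) '' Set.univ := by
      ext p
      simp only [Set.image_univ, Set.mem_range, hD, Set.mem_setOf_eq]
      constructor
      · intro h; exact ⟨p.1, (Prod.ext rfl h.symm)⟩
      · rintro ⟨u, rfl⟩; rfl
    rw [this, Set.ncard_image_of_injective _ (fun a b h => (Prod.ext_iff.mp h).1),
      Set.ncard_univ, Nat.card_eq_fintype_card]
  have hmem : Fintype.card V ∈ {n | ∃ D : Set (V × Bool), IsFairDomSet (corona T₁) D ∧ D.ncard = n} :=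
    ⟨D, hDfair, hDcard⟩
  have hlb : ∀ n ∈ {n | ∃ D : Set (V × Bool), IsFairDomSet (corona T₁) D ∧ D.ncard = n},
      Fintype.card V ≤ n := by
    rintro n ⟨E, hE, rfl⟩
    have hinj : Function.Injective (fun u : V =>
        if (u, false) ∈ E then ((u, false) : V × Bool) else (u, true)) := by
      intro a b h
      dsimp at h
      split_ifs at h <;> exact (Prod.ext_iff.mp h).1
    have hsub : Set.range (fun u : V =>
        if (u, false) ∈ E then ((u, false) : V × Bool) else (u, true)) ⊆ E := by
      rintro p ⟨u, rfl⟩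
      dsimp
      split_ifs with h
      · exact h
      · by_contra hc
        obtain ⟨w, hwE, hadj⟩ := hE.1 (u, true) hc
        rw [corona_adj_leaf] at hadj
        exact h (hadj ▸ hwE)
    calc Fintype.card V = (Set.range (fun u : V =>
          if (u, false) ∈ E then ((u, false) : V × Bool) else (u, true))).ncard := by
          rw [← Set.image_univ, Set.ncard_image_of_injective _ hinj, Set.ncard_univ,
            Nat.card_eq_fintype_card]
      _ ≤ E.ncard := Set.ncard_le_ncard hsub (Set.toFinite E)
  exact le_antisymm (Nat.sInf_le hmem) (hlb _ (Nat.sInf_mem ⟨_, hmem⟩))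
end

section
/- Every cubic (3-regular) simple graph on 6 vertices has fair coalition number equal to 6. -/
open SimpleGraph

open Finset

section Aux

variable {V : Type*} [Fintype V] [DecidableEq V] (G : SimpleGraph V) [DecidableRel G.Adj]

lemma nbhd_eq (hcubic : G.IsRegularOfDegree 3) {u : V} {s : Finset V}
    (hs : s ⊆ G.neighborFinset u) (h3 : 3 ≤ s.card) : G.neighborFinset u = s :=
  (Finset.eq_of_subset_of_card_le hs
    (by rw [G.card_neighborFinset_eq_degree, hcubic u]; exact h3)).symm

omit [DecidableEq V] in
lemma nbhd_small (hcubic : G.IsRegularOfDegree 3) {u : V} {s : Finset V}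
    (hs : G.neighborFinset u ⊆ s) (h3 : s.card < 3) : False := by
  have := Finset.card_le_card hs
  rw [G.card_neighborFinset_eq_degree, hcubic u] at this
  omega

lemma pathCase (hcard : Fintype.card V = 6) (hcubic : G.IsRegularOfDegree 3)
    (v a b c : V) (hN : G.neighborFinset v = {a, b, c})
    (hab' : a ≠ b) (hac' : a ≠ c) (hbc' : b ≠ c)
    (hab : G.Adj a b) (hac : G.Adj a c) (hbc : ¬ G.Adj b c) : False := by
  have hva : G.Adj v a := by rw [← mem_neighborFinset, hN]; simp
  have hvb : G.Adj v b := by rw [← mem_neighborFinset, hN]; simp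
  have hvc : G.Adj v c := by rw [← mem_neighborFinset, hN]; simp
  have hva' : v ≠ a := hva.ne
  have hvb' : v ≠ b := hvb.ne
  have hvc' : v ≠ c := hvc.ne
  -- N(a) = {v, b, c}
  have hNa : G.neighborFinset a = {v, b, c} := by
    apply nbhd_eq G hcubic
    · intro t ht; simp only [mem_insert, mem_singleton] at ht
      rcases ht with rfl | rfl | rfl <;> rw [mem_neighborFinset]
      exacts [hva.symm, hab, hac]
    · rw [card_insert_of_notMem (by simp [hvb', hvc']),
        card_insert_of_notMem (by simp [hbc']), card_singleton]
  -- third neighbor of b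
  have hbx : ∃ x, G.Adj b x ∧ x ∉ ({v, a} : Finset V) := by
    by_contra hcon
    push_neg at hcon
    exact nbhd_small G hcubic (fun t ht => hcon t ((mem_neighborFinset ..).1 ht))
      (by rw [card_insert_of_notMem (by simp [hva']), card_singleton]; omega)
  obtain ⟨x, hbxadj, hx⟩ := hbx
  simp only [mem_insert, mem_singleton, not_or] at hx
  obtain ⟨hxv, hxa⟩ := hx
  have hxb : x ≠ b := fun h => G.irrefl (h ▸ hbxadj)
  have hxc : x ≠ c := fun h => hbc (h ▸ hbxadj)
  have hNb : G.neighborFinset b = {v, a, x} := by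
    apply nbhd_eq G hcubic
    · intro t ht; simp only [mem_insert, mem_singleton] at ht
      rcases ht with rfl | rfl | rfl <;> rw [mem_neighborFinset]
      exacts [hvb.symm, hab.symm, hbxadj]
    · rw [card_insert_of_notMem (by simp [hva', Ne.symm hxv]),
        card_insert_of_notMem (by simp [Ne.symm hxa]), card_singleton]
  -- third neighbor of c
  have hcy : ∃ y, G.Adj c y ∧ y ∉ ({v, a} : Finset V) := by
    by_contra hcon
    push_neg at hcon
    exact nbhd_small G hcubic (fun t ht => hcon t ((mem_neighborFinset ..).1 ht))
      (by rw [card_insert_of_notMem (by simp [hva']), card_singleton]; omega)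
  obtain ⟨y, hcyadj, hy⟩ := hcy
  simp only [mem_insert, mem_singleton, not_or] at hy
  obtain ⟨hyv, hya⟩ := hy
  have hyc : y ≠ c := fun h => G.irrefl (h ▸ hcyadj)
  have hyb : y ≠ b := fun h => hbc (h ▸ hcyadj).symm
  have hNc : G.neighborFinset c = {v, a, y} := by
    apply nbhd_eq G hcubic
    · intro t ht; simp only [mem_insert, mem_singleton] at ht
      rcases ht with rfl | rfl | rfl <;> rw [mem_neighborFinset]
      exacts [hvc.symm, hac.symm, hcyadj]
    · rw [card_insert_of_notMem (by simp [hva', Ne.symm hyv]),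
        card_insert_of_notMem (by simp [Ne.symm hya]), card_singleton]
  by_cases hxy : x = y
  · subst hxy
    have h5 : ({v, a, b, c, x} : Finset V).card = 5 := by
      rw [card_insert_of_notMem (by simp [hva', hvb', hvc', Ne.symm hxv]),
        card_insert_of_notMem (by simp [hab', hac', Ne.symm hxa]),
        card_insert_of_notMem (by simp [hbc', Ne.symm hxb]),
        card_insert_of_notMem (by simp [Ne.symm hxc]), card_singleton]
    have hz : ∃ z, z ∉ ({v, a, b, c, x} : Finset V) := by
      by_contra hcon
      push_neg at hcon
      have := Finset.card_le_card (fun t _ => hcon t : (univ : Finset V) ⊆ _)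
      rw [Finset.card_univ, hcard, h5] at this
      omega
    obtain ⟨z, hz⟩ := hz
    simp only [mem_insert, mem_singleton, not_or] at hz
    obtain ⟨hzv, hza, hzb, hzc, hzx⟩ := hz
    have huniv : (univ : Finset V) = {v, a, b, c, x, z} := by
      apply (Finset.eq_of_subset_of_card_le (fun t _ => mem_univ t) _).symm
      rw [Finset.card_univ, hcard]
      rw [card_insert_of_notMem (by simp [hva', hvb', hvc', Ne.symm hxv, Ne.symm hzv]),
        card_insert_of_notMem (by simp [hab', hac', Ne.symm hxa, Ne.symm hza]),
        card_insert_of_notMem (by simp [hbc', Ne.symm hxb, Ne.symm hzb]),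
        card_insert_of_notMem (by simp [Ne.symm hxc, Ne.symm hzc]),
        card_insert_of_notMem (by simp [Ne.symm hzx]), card_singleton]
    apply nbhd_small G hcubic (u := z) (s := {x}) _ (by simp)
    intro t ht
    rw [mem_neighborFinset] at ht
    have htu : t ∈ ({v, a, b, c, x, z} : Finset V) := huniv ▸ mem_univ t
    simp only [mem_insert, mem_singleton] at htu ⊢
    rcases htu with rfl | rfl | rfl | rfl | rfl | rfl
    · exact absurd ((mem_neighborFinset ..).2 ht.symm) (by rw [hN]; simp [hza, hzb, hzc])
    · exact absurd ((mem_neighborFinset ..).2 ht.symm) (by rw [hNa]; simp [hzv, hzb, hzc])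
    · exact absurd ((mem_neighborFinset ..).2 ht.symm) (by rw [hNb]; simp [hzv, hza, hzx])
    · exact absurd ((mem_neighborFinset ..).2 ht.symm) (by rw [hNc]; simp [hzv, hza, hzx])
    · rfl
    · exact absurd ht (G.irrefl)
  · -- x ≠ y
    have huniv : (univ : Finset V) = {v, a, b, c, x, y} := by
      apply (Finset.eq_of_subset_of_card_le (fun t _ => mem_univ t) _).symm
      rw [Finset.card_univ, hcard]
      rw [card_insert_of_notMem (by simp [hva', hvb', hvc', Ne.symm hxv, Ne.symm hyv]),
        card_insert_of_notMem (by simp [hab', hac', Ne.symm hxa, Ne.symm hya]),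
        card_insert_of_notMem (by simp [hbc', Ne.symm hxb, Ne.symm hyb]),
        card_insert_of_notMem (by simp [Ne.symm hxc, Ne.symm hyc]),
        card_insert_of_notMem (by simp [hxy]), card_singleton]
    apply nbhd_small G hcubic (u := x) (s := {b, y}) _
      (by rw [card_insert_of_notMem (by simp [Ne.symm hyb]), card_singleton]; omega)
    intro t ht
    rw [mem_neighborFinset] at ht
    have htu : t ∈ ({v, a, b, c, x, y} : Finset V) := huniv ▸ mem_univ t
    simp only [mem_insert, mem_singleton] at htu ⊢
    rcases htu with rfl | rfl | rfl | rfl | rfl | rfl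
    · exact absurd ((mem_neighborFinset ..).2 ht.symm) (by rw [hN]; simp [hxa, hxb, hxc])
    · exact absurd ((mem_neighborFinset ..).2 ht.symm) (by rw [hNa]; simp [hxv, hxb, hxc])
    · exact Or.inl rfl
    · exact absurd ((mem_neighborFinset ..).2 ht.symm) (by rw [hNc]; simp [hxv, hxa, hxy])
    · exact absurd ht (G.irrefl)
    · exact Or.inr rfl

lemma k4Case (hcard : Fintype.card V = 6) (hcubic : G.IsRegularOfDegree 3)
    (v a b c : V) (hN : G.neighborFinset v = {a, b, c})
    (hab' : a ≠ b) (hac' : a ≠ c) (hbc' : b ≠ c)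
    (hab : G.Adj a b) (hac : G.Adj a c) (hbc : G.Adj b c) : False := by
  have hva : G.Adj v a := by rw [← mem_neighborFinset, hN]; simp
  have hvb : G.Adj v b := by rw [← mem_neighborFinset, hN]; simp
  have hvc : G.Adj v c := by rw [← mem_neighborFinset, hN]; simp
  have hva' : v ≠ a := hva.ne
  have hvb' : v ≠ b := hvb.ne
  have hvc' : v ≠ c := hvc.ne
  have hNa : G.neighborFinset a = {v, b, c} := by
    apply nbhd_eq G hcubic
    · intro t ht; simp only [mem_insert, mem_singleton] at ht
      rcases ht with rfl | rfl | rfl <;> rw [mem_neighborFinset]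
      exacts [hva.symm, hab, hac]
    · rw [card_insert_of_notMem (by simp [hvb', hvc']),
        card_insert_of_notMem (by simp [hbc']), card_singleton]
  have hNb : G.neighborFinset b = {v, a, c} := by
    apply nbhd_eq G hcubic
    · intro t ht; simp only [mem_insert, mem_singleton] at ht
      rcases ht with rfl | rfl | rfl <;> rw [mem_neighborFinset]
      exacts [hvb.symm, hab.symm, hbc]
    · rw [card_insert_of_notMem (by simp [hva', hvc']),
        card_insert_of_notMem (by simp [hac']), card_singleton]
  have hNc : G.neighborFinset c = {v, a, b} := by
    apply nbhd_eq G hcubic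
    · intro t ht; simp only [mem_insert, mem_singleton] at ht
      rcases ht with rfl | rfl | rfl <;> rw [mem_neighborFinset]
      exacts [hvc.symm, hac.symm, hbc.symm]
    · rw [card_insert_of_notMem (by simp [hva', hvb']),
        card_insert_of_notMem (by simp [hab']), card_singleton]
  have h4 : ({v, a, b, c} : Finset V).card = 4 := by
    rw [card_insert_of_notMem (by simp [hva', hvb', hvc']),
      card_insert_of_notMem (by simp [hab', hac']),
      card_insert_of_notMem (by simp [hbc']), card_singleton]
  have hx : ∃ x, x ∉ ({v, a, b, c} : Finset V) := by
    by_contra hcon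
    push_neg at hcon
    have := Finset.card_le_card (fun t _ => hcon t : (univ : Finset V) ⊆ _)
    rw [Finset.card_univ, hcard, h4] at this
    omega
  obtain ⟨x, hx⟩ := hx
  simp only [mem_insert, mem_singleton, not_or] at hx
  obtain ⟨hxv, hxa, hxb, hxc⟩ := hx
  have h5 : ({v, a, b, c, x} : Finset V).card = 5 := by
    rw [card_insert_of_notMem (by simp [hva', hvb', hvc', Ne.symm hxv]),
      card_insert_of_notMem (by simp [hab', hac', Ne.symm hxa]),
      card_insert_of_notMem (by simp [hbc', Ne.symm hxb]),
      card_insert_of_notMem (by simp [Ne.symm hxc]), card_singleton]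
  have hz : ∃ z, z ∉ ({v, a, b, c, x} : Finset V) := by
    by_contra hcon
    push_neg at hcon
    have := Finset.card_le_card (fun t _ => hcon t : (univ : Finset V) ⊆ _)
    rw [Finset.card_univ, hcard, h5] at this
    omega
  obtain ⟨z, hz⟩ := hz
  simp only [mem_insert, mem_singleton, not_or] at hz
  obtain ⟨hzv, hza, hzb, hzc, hzx⟩ := hz
  have huniv : (univ : Finset V) = {v, a, b, c, x, z} := by
    apply (Finset.eq_of_subset_of_card_le (fun t _ => mem_univ t) _).symm
    rw [Finset.card_univ, hcard]
    rw [card_insert_of_notMem (by simp [hva', hvb', hvc', Ne.symm hxv, Ne.symm hzv]),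
      card_insert_of_notMem (by simp [hab', hac', Ne.symm hxa, Ne.symm hza]),
      card_insert_of_notMem (by simp [hbc', Ne.symm hxb, Ne.symm hzb]),
      card_insert_of_notMem (by simp [Ne.symm hxc, Ne.symm hzc]),
      card_insert_of_notMem (by simp [Ne.symm hzx]), card_singleton]
  apply nbhd_small G hcubic (u := x) (s := {z}) _ (by simp)
  intro t ht
  rw [mem_neighborFinset] at ht
  have htu : t ∈ ({v, a, b, c, x, z} : Finset V) := huniv ▸ mem_univ t
  simp only [mem_insert, mem_singleton] at htu ⊢
  rcases htu with rfl | rfl | rfl | rfl | rfl | rfl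
  · exact absurd ((mem_neighborFinset ..).2 ht.symm) (by rw [hN]; simp [hxa, hxb, hxc])
  · exact absurd ((mem_neighborFinset ..).2 ht.symm) (by rw [hNa]; simp [hxv, hxb, hxc])
  · exact absurd ((mem_neighborFinset ..).2 ht.symm) (by rw [hNb]; simp [hxv, hxa, hxc])
  · exact absurd ((mem_neighborFinset ..).2 ht.symm) (by rw [hNc]; simp [hxv, hxa, hxb])
  · exact absurd ht (G.irrefl)
  · rfl

lemma keyLemma (hcard : Fintype.card V = 6) (hcubic : G.IsRegularOfDegree 3) (v : V) :
    ∃ u, G.Adj v u ∧ ∀ w, ¬ (G.Adj v w ∧ G.Adj u w) := by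
  by_contra hcon
  push_neg at hcon
  obtain ⟨a, b, c, hab', hac', hbc', hN⟩ := Finset.card_eq_three.mp
    (by rw [G.card_neighborFinset_eq_degree]; exact hcubic v)
  have hva : G.Adj v a := by rw [← mem_neighborFinset, hN]; simp
  have hvb : G.Adj v b := by rw [← mem_neighborFinset, hN]; simp
  have hvc : G.Adj v c := by rw [← mem_neighborFinset, hN]; simp
  have mem_of : ∀ w, G.Adj v w → w = a ∨ w = b ∨ w = c := by
    intro w hw
    have := (mem_neighborFinset ..).2 hw
    rw [hN] at this
    simpa using this
  have ha : G.Adj a b ∨ G.Adj a c := by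
    obtain ⟨w, hvw, haw⟩ := hcon a hva
    rcases mem_of w hvw with rfl | rfl | rfl
    · exact absurd haw G.irrefl
    · exact Or.inl haw
    · exact Or.inr haw
  have hb : G.Adj b a ∨ G.Adj b c := by
    obtain ⟨w, hvw, hbw⟩ := hcon b hvb
    rcases mem_of w hvw with rfl | rfl | rfl
    · exact Or.inl hbw
    · exact absurd hbw G.irrefl
    · exact Or.inr hbw
  have hc : G.Adj c a ∨ G.Adj c b := by
    obtain ⟨w, hvw, hcw⟩ := hcon c hvc
    rcases mem_of w hvw with rfl | rfl | rfl
    · exact Or.inl hcw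
    · exact Or.inr hcw
    · exact absurd hcw G.irrefl
  have hperm1 : ({a, b, c} : Finset V) = {b, a, c} := by ext t; simp; tauto
  have hperm2 : ({a, b, c} : Finset V) = {c, a, b} := by ext t; simp; tauto
  by_cases eab : G.Adj a b <;> by_cases eac : G.Adj a c <;> by_cases ebc : G.Adj b c
  · exact k4Case G hcard hcubic v a b c hN hab' hac' hbc' eab eac ebc
  · exact pathCase G hcard hcubic v a b c hN hab' hac' hbc' eab eac ebc
  · exact pathCase G hcard hcubic v b a c (hN.trans hperm1) (Ne.symm hab') hbc' hac'
      eab.symm ebc (fun h => eac h)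
  · rcases hc with h | h
    exacts [eac h.symm, ebc h.symm]
  · exact pathCase G hcard hcubic v c a b (hN.trans hperm2) (Ne.symm hac') (Ne.symm hbc') hab'
      eac.symm ebc.symm (fun h => eab h)
  · rcases hb with h | h
    exacts [eab h.symm, ebc h]
  · rcases ha with h | h
    exacts [eab h, eac h]
  · rcases ha with h | h
    exacts [eab h, eac h]

lemma singleton_not_fair (hcard : Fintype.card V = 6) (hcubic : G.IsRegularOfDegree 3)
    (v : V) : ¬ IsFairDomSet G {v} := by
  rintro ⟨hdom, -⟩
  have hsub : Finset.univ.erase v ⊆ G.neighborFinset v := by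
    intro w hw
    obtain ⟨u, hu, hadj⟩ := hdom w (by simpa using (Finset.mem_erase.1 hw).1)
    rw [Set.mem_singleton_iff] at hu; subst hu
    exact (mem_neighborFinset ..).2 hadj.symm
  have := Finset.card_le_card hsub
  rw [G.card_neighborFinset_eq_degree, hcubic v, Finset.card_erase_of_mem (mem_univ v),
    Finset.card_univ, hcard] at this
  omega

lemma pair_fair (hcard : Fintype.card V = 6) (hcubic : G.IsRegularOfDegree 3)
    (v u : V) (hadj : G.Adj v u) (hnc : ∀ w, ¬ (G.Adj v w ∧ G.Adj u w)) :
    IsFairDomSet G ({v} ∪ {u} : Set V) := by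
  have huniv : ∀ w : V, G.Adj v w ∨ G.Adj u w := by
    intro w
    by_contra hcon
    push_neg at hcon
    have hdisj : Disjoint (G.neighborFinset v) (G.neighborFinset u) := by
      rw [Finset.disjoint_left]
      intro t htv htu
      exact hnc t ⟨(mem_neighborFinset ..).1 htv, (mem_neighborFinset ..).1 htu⟩
    have hcardu : (G.neighborFinset v ∪ G.neighborFinset u).card = 6 := by
      rw [Finset.card_union_of_disjoint hdisj, G.card_neighborFinset_eq_degree,
        G.card_neighborFinset_eq_degree, hcubic v, hcubic u]
    have hU : G.neighborFinset v ∪ G.neighborFinset u = univ :=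
      Finset.eq_univ_of_card _ (by rw [hcardu, hcard])
    have hw : w ∈ (univ : Finset V) := mem_univ w
    rw [← hU, Finset.mem_union] at hw
    rcases hw with h | h
    exacts [hcon.1 ((mem_neighborFinset ..).1 h), hcon.2 ((mem_neighborFinset ..).1 h)]
  constructor
  · intro w _
    rcases huniv w with h | h
    · exact ⟨v, by simp, h.symm⟩
    · exact ⟨u, by simp, h.symm⟩
  · refine ⟨1, le_refl 1, ?_⟩
    intro w _
    rcases huniv w with h | h
    · have hEq : G.neighborSet w ∩ ({v} ∪ {u}) = {v} := by
        ext t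
        simp only [Set.mem_inter_iff, mem_neighborSet, Set.mem_union, Set.mem_singleton_iff]
        constructor
        · rintro ⟨hadjt, rfl | rfl⟩
          · rfl
          · exact absurd ⟨h, hadjt.symm⟩ (hnc w)
        · rintro rfl; exact ⟨h.symm, Or.inl rfl⟩
      rw [hEq, Set.ncard_singleton]
    · have hnv : ¬ G.Adj v w := fun h' => hnc w ⟨h', h⟩
      have hEq : G.neighborSet w ∩ ({v} ∪ {u}) = {u} := by
        ext t
        simp only [Set.mem_inter_iff, mem_neighborSet, Set.mem_union, Set.mem_singleton_iff]
        constructor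
        · rintro ⟨hadjt, rfl | rfl⟩
          · exact absurd hadjt.symm hnv
          · rfl
        · rintro rfl; exact ⟨h.symm, Or.inr rfl⟩
      rw [hEq, Set.ncard_singleton]

end Aux

theorem stmt_11 {V : Type*} [Fintype V] (G : SimpleGraph V) [DecidableRel G.Adj]
    (hcard : Fintype.card V = 6) (hcubic : G.IsRegularOfDegree 3) :
    fairCoalitionNumber G = 6 := by
  classical
  have hne : Nonempty V := by
    rw [← Fintype.card_pos_iff, hcard]; omega
  set S := {n | ∃ P : Finset (Set V), IsFairCoalitionPartition G P ∧ P.card = n} with hS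
  have hub : ∀ n ∈ S, n ≤ 6 := by
    rintro n ⟨P, ⟨hnonempty, hdisj, -, -⟩, rfl⟩
    have hle : P.card ≤ (Finset.univ : Finset V).card := by
      apply Finset.card_le_card_of_injOn
        (fun A => if h : A.Nonempty then h.choose else Classical.arbitrary V)
        (fun _ _ => Finset.mem_univ _)
      intro A hA B hB hfAB
      by_contra hAB
      have hAn := hnonempty A (Finset.mem_coe.1 hA)
      have hBn := hnonempty B (Finset.mem_coe.1 hB)
      have h1 : (if h : A.Nonempty then h.choose else Classical.arbitrary V) ∈ A := by
        rw [dif_pos hAn]; exact hAn.choose_spec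
      have h2 : (if h : B.Nonempty then h.choose else Classical.arbitrary V) ∈ B := by
        rw [dif_pos hBn]; exact hBn.choose_spec
      have hfAB' : (if h : A.Nonempty then h.choose else Classical.arbitrary V)
          = (if h : B.Nonempty then h.choose else Classical.arbitrary V) := hfAB
      rw [hfAB'] at h1
      exact Set.disjoint_left.mp (hdisj hA hB hAB) h1 h2
    rwa [Finset.card_univ, hcard] at hle
  have hmem : 6 ∈ S := by
    refine ⟨Finset.univ.image (fun v => ({v} : Set V)), ⟨?_, ?_, ?_, ?_⟩, ?_⟩
    · intro A hA
      simp only [Finset.mem_image] at hA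
      obtain ⟨v, -, rfl⟩ := hA
      exact Set.singleton_nonempty v
    · intro A hA B hB hAB
      obtain ⟨v, -, rfl⟩ := Finset.mem_image.1 (Finset.mem_coe.1 hA)
      obtain ⟨u, -, rfl⟩ := Finset.mem_image.1 (Finset.mem_coe.1 hB)
      exact Set.disjoint_singleton.mpr (fun h => hAB (by rw [h]))
    · ext w
      simp only [Set.mem_sUnion, Set.mem_univ, iff_true]
      exact ⟨{w}, Finset.mem_coe.2 (Finset.mem_image.2 ⟨w, mem_univ w, rfl⟩), rfl⟩
    · intro A hA
      simp only [Finset.mem_image] at hA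
      obtain ⟨v, -, rfl⟩ := hA
      right
      obtain ⟨u, hadj, hnc⟩ := keyLemma G hcard hcubic v
      refine ⟨singleton_not_fair G hcard hcubic v, {u},
        Finset.mem_image.2 ⟨u, mem_univ u, rfl⟩, ?_,
        singleton_not_fair G hcard hcubic u, ?_⟩
      · intro h
        exact hadj.ne' (Set.singleton_injective h)
      · exact (Set.union_comm _ _) ▸ pair_fair G hcard hcubic v u hadj hnc
    · rw [Finset.card_image_of_injective _ Set.singleton_injective, Finset.card_univ, hcard]
  rw [fairCoalitionNumber, ← hS]
  exact le_antisymm (csSup_le ⟨6, hmem⟩ hub) (le_csSup ⟨6, hub⟩ hmem)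
end

section
/- The fair coalition number of the complete bipartite graph K_{3,3} equals 6. -/
open SimpleGraph

abbrev VV := Fin 3 ⊕ Fin 3
abbrev GG := completeBipartiteGraph (Fin 3) (Fin 3)

lemma not_fair_singleton (v : VV) : ¬ IsFairDomSet GG {v} := by
  rintro ⟨hdom, -⟩
  rcases v with i | i
  · obtain ⟨u, hu, hadj⟩ := hdom (Sum.inl (i+1)) (by simp [Fin.ext_iff])
    simp only [Set.mem_singleton_iff] at hu
    subst hu; simp at hadj
  · obtain ⟨u, hu, hadj⟩ := hdom (Sum.inr (i+1)) (by simp [Fin.ext_iff])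
    simp only [Set.mem_singleton_iff] at hu
    subst hu; simp at hadj

lemma fair_pair (i : Fin 3) :
    IsFairDomSet GG ({Sum.inl i} ∪ {Sum.inr i}) := by
  constructor
  · rintro (j | j) hv
    · exact ⟨Sum.inr i, by simp, by simp⟩
    · exact ⟨Sum.inl i, by simp, by simp⟩
  · refine ⟨1, le_refl 1, ?_⟩
    rintro (j | j) hv
    · have : GG.neighborSet (Sum.inl j) ∩ ({Sum.inl i} ∪ {Sum.inr i}) = {Sum.inr i} := by
        ext (x | x) <;> simp [neighborSet]
      rw [this, Set.ncard_singleton]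
    · have : GG.neighborSet (Sum.inr j) ∩ ({Sum.inl i} ∪ {Sum.inr i}) = {Sum.inl i} := by
        ext (x | x) <;> simp [neighborSet]
      rw [this, Set.ncard_singleton]

lemma card_bound (P : Finset (Set VV)) (hne : ∀ A ∈ P, A.Nonempty)
    (hdisj : (P : Set (Set VV)).PairwiseDisjoint id) : P.card ≤ 6 := by
  classical
  have : P.card ≤ (Finset.univ : Finset VV).card := by
    apply Finset.card_le_card_of_injOn
      (fun A => if h : A.Nonempty then h.choose else Sum.inl 0)
    · intro A _; exact Finset.mem_univ _
    · intro A hA B hB hAB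
      have hAne := hne A hA
      have hBne := hne B hB
      simp only [dif_pos hAne, dif_pos hBne] at hAB
      by_contra hne'
      have := hdisj hA hB hne'
      have hx : hAne.choose ∈ A := hAne.choose_spec
      have hy : hBne.choose ∈ B := hBne.choose_spec
      rw [hAB] at hx
      exact (Set.disjoint_left.mp this hx) hy
  simpa using this

theorem stmt_12 :
    fairCoalitionNumber (completeBipartiteGraph (Fin 3) (Fin 3)) = 6 := by
  classical
  set S := {n | ∃ P : Finset (Set VV), IsFairCoalitionPartition GG P ∧ P.card = n} with hS
  have h6 : 6 ∈ S := by
    refine ⟨Finset.univ.image (fun v : VV => ({v} : Set VV)), ?_, ?_⟩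
    · refine ⟨?_, ?_, ?_, ?_⟩
      · intro A hA
        simp only [Finset.mem_image] at hA
        obtain ⟨v, -, rfl⟩ := hA
        exact ⟨v, rfl⟩
      · intro A hA B hB hAB
        simp only [Finset.coe_image, Set.mem_image] at hA hB
        obtain ⟨v, -, rfl⟩ := hA
        obtain ⟨w, -, rfl⟩ := hB
        simp only [Function.onFun, id_eq]
        rw [Set.disjoint_singleton_left, Set.mem_singleton_iff]
        intro h; exact hAB (by rw [h])
      · ext v
        simp only [Set.mem_sUnion, Finset.coe_image, Set.mem_image, Set.mem_univ, iff_true]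
        exact ⟨{v}, ⟨v, by simp⟩, rfl⟩
      · intro A hA
        simp only [Finset.mem_image] at hA
        obtain ⟨v, -, rfl⟩ := hA
        right
        refine ⟨not_fair_singleton v, ?_⟩
        rcases v with i | i
        · refine ⟨{Sum.inr i}, by simp, ?_, not_fair_singleton _, fair_pair i⟩
          intro h
          have : (Sum.inr i : VV) ∈ ({Sum.inl i} : Set VV) := by rw [← h]; rfl
          simp at this
        · refine ⟨{Sum.inl i}, by simp, ?_, not_fair_singleton _, ?_⟩
          · intro h
            have : (Sum.inl i : VV) ∈ ({Sum.inr i} : Set VV) := by rw [← h]; rfl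
            simp at this
          · rw [Set.union_comm]; exact fair_pair i
    · rw [Finset.card_image_of_injective _ (fun a b h => Set.singleton_eq_singleton_iff.mp h)]
      simp
  have hbdd : ∀ n ∈ S, n ≤ 6 := by
    rintro n ⟨P, ⟨hne, hdisj, -, -⟩, rfl⟩
    exact card_bound P hne hdisj
  refine le_antisymm (csSup_le ⟨6, h6⟩ hbdd) (le_csSup ⟨6, hbdd⟩ h6)
end
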